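/- arXiv:2207.14398 — 5 statements merged into one kernel-verified Lean document; each statement's English description precedes it below -/
import Mathlib

section
/- (Theorem 1) Let S : ℕ → Z_{n₂} ∪ {*} be a shift sequence with S(i+n₁) = S(i) for all i, let C : ℕ → 𝔽_q be a column sequence with C(j+n₂) = C(j) for all j, and let A be the 2-dimensional composed array defined by A(i,j) = C(j − S(i) mod n₂) if S(i) ≠ * and A(i,j) = 0 if S(i) = *. Then n₂·L(A) ≤ n₁·n₂·L(C), equivalently L(A) ≤ n₁·L(C); i.e., the normalized linear complexity of A is at most the normalized linear complexity of C. -/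
set_option maxHeartbeats 1000000 in
open MvPolynomial in
/-- Theorem 1: if `A` is the 2-dimensional array obtained by composing an
`n₁`-periodic shift sequence `S : ℕ → ZMod n₂ ∪ {*}` with an `n₂`-periodic
column sequence `C` (columns with undetermined shift `*` consisting of zeros),
then `L(A) ≤ n₁ * L(C)`, i.e. the normalized linear complexity of `A` is at
most the normalized linear complexity of `C`. -/
theorem stmt_7 {F : Type*} [Field F] [Fintype F] (n₁ n₂ : ℕ)
    (hn₁ : 0 < n₁) [NeZero n₂]
    (S : ℕ → Option (ZMod n₂)) (hS : ∀ i : ℕ, S (i + n₁) = S i)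
    (C : ℕ → F) (hC : ∀ j : ℕ, C (j + n₂) = C j)
    (A : ℕ → ℕ → F)
    (hA : ∀ i j : ℕ,
      A i j = (S i).elim 0 (fun s => C (((j : ZMod n₂) - s).val)))
    (IC : Ideal (Polynomial F))
    (hIC : ∀ g : Polynomial F,
      g ∈ IC ↔ ∀ β : ℕ, ∑ j ∈ g.support, g.coeff j * C (j + β) = 0)
    (IA : Ideal (MvPolynomial (Fin 2) F))
    (hIA : ∀ f : MvPolynomial (Fin 2) F,
      f ∈ IA ↔ ∀ β₁ β₂ : ℕ,
        ∑ v ∈ f.support, f.coeff v * A (v 0 + β₁) (v 1 + β₂) = 0) :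
    Module.finrank F (MvPolynomial (Fin 2) F ⧸ IA) ≤
      n₁ * Module.finrank F (Polynomial F ⧸ IC) := by
  classical
  have hn₂ : 0 < n₂ := NeZero.pos n₂
  have hCkey : ∀ k m : ℕ, C (m + n₂ * k) = C m := by
    intro k
    induction k with
    | zero => simp
    | succ k ih => intro m; rw [Nat.mul_succ, ← add_assoc, hC, ih]
  have hCmod : ∀ m : ℕ, C m = C (m % n₂) := by
    intro m
    conv_lhs => rw [← Nat.mod_add_div m n₂]
    exact hCkey _ _
  set L : ℕ → ℕ → MvPolynomial (Fin 2) F →ₗ[F] F := fun β₁ β₂ =>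
    (Finsupp.lsum F fun v : Fin 2 →₀ ℕ =>
      LinearMap.smulRight (LinearMap.id : F →ₗ[F] F) (A (v 0 + β₁) (v 1 + β₂))) ∘ₗ
        (AddMonoidAlgebra.coeffLinearEquiv F).toLinearMap with hLdef
  have hL : ∀ (β₁ β₂ : ℕ) (f : MvPolynomial (Fin 2) F),
      L β₁ β₂ f = ∑ v ∈ f.support, f.coeff v * A (v 0 + β₁) (v 1 + β₂) := by
    intro β₁ β₂ f; rfl
  have hIA' : ∀ f : MvPolynomial (Fin 2) F,
      f ∈ IA ↔ ∀ β₁ β₂ : ℕ, L β₁ β₂ f = 0 := by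
    intro f; rw [hIA]; simp only [hL]
  have hLmono : ∀ (β₁ β₂ : ℕ) (d : Fin 2 →₀ ℕ) (c : F),
      L β₁ β₂ (monomial d c) = c * A (d 0 + β₁) (d 1 + β₂) := by
    intro β₁ β₂ d c
    rw [← MvPolynomial.single_eq_monomial, hLdef]
    exact Finsupp.lsum_single F _ _ _
  have hAper : ∀ i j : ℕ, A (i + n₁) j = A i j := by
    intro i j; rw [hA, hA, hS]
  have hXA : (X 0 : MvPolynomial (Fin 2) F) ^ n₁ - 1 ∈ IA := by
    rw [hIA']
    intro β₁ β₂
    have hXmon : (X 0 : MvPolynomial (Fin 2) F) ^ n₁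
        = monomial (Finsupp.single 0 n₁) 1 := MvPolynomial.X_pow_eq_monomial
    have h1mon : (1 : MvPolynomial (Fin 2) F) = MvPolynomial.monomial 0 1 := by
      rw [← MvPolynomial.C_1]; exact MvPolynomial.C_apply
    rw [hXmon, h1mon, map_sub, hLmono, hLmono]
    have e2 : (Finsupp.single (0 : Fin 2) n₁) 1 = 0 := Finsupp.single_eq_of_ne (by decide)
    simp only [Finsupp.single_eq_same, e2, Finsupp.coe_zero, Pi.zero_apply, one_mul, zero_add]
    rw [add_comm n₁ β₁, hAper, sub_self]
  set ι : Polynomial F →ₐ[F] MvPolynomial (Fin 2) F := Polynomial.aeval (X 1) with hιdef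
  have hιg : ∀ g : Polynomial F,
      ι g = ∑ j ∈ g.support, monomial (Finsupp.single 1 j) (g.coeff j) := by
    intro g
    rw [hιdef, Polynomial.aeval_def, Polynomial.eval₂_eq_sum, Polynomial.sum]
    refine Finset.sum_congr rfl fun j _ => ?_
    rw [MvPolynomial.X_pow_eq_monomial, MvPolynomial.algebraMap_eq,
      MvPolynomial.C_mul_monomial, mul_one]
  have hB : ∀ g ∈ IC, ι g ∈ IA := by
    intro g hg
    rw [hIA']
    intro β₁ β₂
    rw [hιg, map_sum]
    have h1 : ∀ j ∈ g.support,
        L β₁ β₂ (monomial (Finsupp.single 1 j) (g.coeff j)) = g.coeff j * A β₁ (j + β₂) := by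
      intro j _
      rw [hLmono]
      simp [Finsupp.single_apply]
    rw [Finset.sum_congr rfl h1]
    cases hs : S β₁ with
    | none => simp [hA, hs]
    | some s =>
      have hval : ∀ j : ℕ, A β₁ (j + β₂) = C (j + ((β₂ : ZMod n₂) - s).val) := by
        intro j
        rw [hA, hs]
        simp only [Option.elim]
        rw [hCmod (j + ((β₂ : ZMod n₂) - s).val)]
        congr 1
        rw [← ZMod.val_natCast]
        congr 1
        push_cast [ZMod.natCast_val, ZMod.cast_id]
        ring
      rw [Finset.sum_congr rfl fun j _ => by rw [hval]]
      exact (hIC g).mp hg _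
  have hXC : (Polynomial.X ^ n₂ - 1 : Polynomial F) ∈ IC := by
    rw [hIC]
    intro β
    have hrepr : (Polynomial.X ^ n₂ - 1 : Polynomial F)
        = Polynomial.C 1 * Polynomial.X ^ n₂ + Polynomial.C (-1) * Polynomial.X ^ 0 := by
      rw [map_one, map_neg, map_one]; ring
    have hsupp : (Polynomial.X ^ n₂ - 1 : Polynomial F).support = {n₂, 0} := by
      rw [hrepr]
      exact Polynomial.support_binomial hn₂.ne' one_ne_zero (neg_ne_zero.mpr one_ne_zero)
    have c1 : (Polynomial.X ^ n₂ - 1 : Polynomial F).coeff n₂ = 1 := by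
      simp [Polynomial.coeff_one, hn₂.ne']
    have c0 : (Polynomial.X ^ n₂ - 1 : Polynomial F).coeff 0 = -1 := by
      simp [Polynomial.coeff_one, hn₂.ne]
    rw [hsupp, Finset.sum_pair hn₂.ne', c1, c0, one_mul, neg_one_mul, zero_add,
      add_comm n₂ β, hC β]
    exact add_neg_cancel _
  set mkC : Polynomial F →ₐ[F] Polynomial F ⧸ IC := Ideal.Quotient.mkₐ F IC with hmkCdef
  have hyc : (mkC Polynomial.X) ^ n₂ = 1 := by
    have h0 : mkC (Polynomial.X ^ n₂ - 1) = 0 := by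
      rw [hmkCdef, Ideal.Quotient.mkₐ_eq_mk, Ideal.Quotient.eq_zero_iff_mem]
      exact hXC
    rwa [map_sub, map_pow, map_one, sub_eq_zero] at h0
  have hycb : ∀ b : ℕ, (mkC Polynomial.X) ^ b = (mkC Polynomial.X) ^ (b % n₂) := by
    intro b
    conv_lhs => rw [← Nat.mod_add_div b n₂]
    rw [pow_add, pow_mul, hyc, one_pow, mul_one]
  have hmemC : ∀ b : ℕ, mkC (Polynomial.X ^ b) ∈
      Submodule.span F (Set.range fun r : Fin n₂ => mkC (Polynomial.X ^ (r : ℕ))) := by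
    intro b
    rw [map_pow, hycb, ← map_pow]
    exact Submodule.subset_span ⟨⟨b % n₂, Nat.mod_lt b hn₂⟩, rfl⟩
  have hspanC : Submodule.span F
      (Set.range fun r : Fin n₂ => mkC (Polynomial.X ^ (r : ℕ))) = ⊤ := by
    rw [eq_top_iff]
    rintro q -
    obtain ⟨p, rfl⟩ := Ideal.Quotient.mk_surjective (I := IC) q
    rw [← Ideal.Quotient.mkₐ_eq_mk F IC, ← hmkCdef]
    induction p using Polynomial.induction_on' with
    | add p q hp hq => rw [map_add]; exact Submodule.add_mem _ hp hq
    | monomial n a =>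
      have : mkC (Polynomial.monomial n a) = a • mkC (Polynomial.X ^ n) := by
        rw [← Polynomial.smul_X_eq_monomial, map_smul]
      rw [this]
      exact Submodule.smul_mem _ _ (hmemC n)
  haveI : Module.Finite F (Polynomial F ⧸ IC) :=
    ⟨Submodule.fg_def.mpr ⟨_, Set.finite_range _, hspanC⟩⟩
  set π : MvPolynomial (Fin 2) F →ₐ[F] MvPolynomial (Fin 2) F ⧸ IA :=
    Ideal.Quotient.mkₐ F IA with hπdef
  have hx1 : (π (X 0)) ^ n₁ = 1 := by
    have h0 : π ((X 0 : MvPolynomial (Fin 2) F) ^ n₁ - 1) = 0 := by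
      rw [hπdef, Ideal.Quotient.mkₐ_eq_mk, Ideal.Quotient.eq_zero_iff_mem]
      exact hXA
    rwa [map_sub, map_pow, map_one, sub_eq_zero] at h0
  have hxa : ∀ a : ℕ, (π (X 0)) ^ a = (π (X 0)) ^ (a % n₁) := by
    intro a
    conv_lhs => rw [← Nat.mod_add_div a n₁]
    rw [pow_add, pow_mul, hx1, one_pow, mul_one]
  set ψ : Polynomial F →ₐ[F] MvPolynomial (Fin 2) F ⧸ IA := π.comp ι with hψdef
  have hψIC : ∀ g ∈ IC, ψ g = 0 := by
    intro g hg
    rw [hψdef, AlgHom.comp_apply, hπdef, Ideal.Quotient.mkₐ_eq_mk,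
      Ideal.Quotient.eq_zero_iff_mem]
    exact hB g hg
  set φ : (Polynomial F ⧸ IC) →ₐ[F] MvPolynomial (Fin 2) F ⧸ IA :=
    Ideal.Quotient.liftₐ IC ψ hψIC with hφdef
  have hφ : ∀ g : Polynomial F, φ (mkC g) = ψ g := by
    intro g
    rw [hφdef, hmkCdef, Ideal.Quotient.mkₐ_eq_mk, Ideal.Quotient.liftₐ_apply,
      ]
    rfl
  set Φ : (Fin n₁ → Polynomial F ⧸ IC) →ₗ[F] MvPolynomial (Fin 2) F ⧸ IA :=
    ∑ i : Fin n₁, (LinearMap.mulLeft F ((π (X 0)) ^ (i : ℕ))).comp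
      (φ.toLinearMap.comp (LinearMap.proj i)) with hΦdef
  have hΦ : ∀ v, Φ v = ∑ i : Fin n₁, (π (X 0)) ^ (i : ℕ) * φ (v i) := by
    intro v
    rw [hΦdef, LinearMap.sum_apply]
    simp only [LinearMap.comp_apply, LinearMap.mulLeft_apply, LinearMap.proj_apply,
      AlgHom.toLinearMap_apply]
  have hkey : ∀ (i : Fin n₁) (x : Polynomial F ⧸ IC),
      (π (X 0)) ^ (i : ℕ) * φ x ∈ LinearMap.range Φ := by
    intro i x
    refine ⟨Pi.single i x, ?_⟩
    rw [hΦ, Finset.sum_eq_single i]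
    · rw [Pi.single_eq_same]
    · intro j _ hj
      rw [Pi.single_eq_of_ne hj, map_zero, mul_zero]
    · intro h; exact absurd (Finset.mem_univ i) h
  have hmono : ∀ v : Fin 2 →₀ ℕ,
      monomial v (1 : F) = (X 0 : MvPolynomial (Fin 2) F) ^ (v 0) * (X 1) ^ (v 1) := by
    intro v
    have hv : Finsupp.single (0 : Fin 2) (v 0) + Finsupp.single 1 (v 1) = v := by
      ext i
      fin_cases i <;> simp [Finsupp.single_apply]
    rw [MvPolynomial.X_pow_eq_monomial, MvPolynomial.X_pow_eq_monomial,
      MvPolynomial.monomial_mul, mul_one, hv]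
  have hπmono : ∀ v : Fin 2 →₀ ℕ, π (monomial v 1) ∈ LinearMap.range Φ := by
    intro v
    have hX1 : π (X 1) = φ (mkC Polynomial.X) := by
      rw [hφ, hψdef, AlgHom.comp_apply]
      congr 1
      rw [hιdef]
      simp
    rw [hmono, map_mul, map_pow, map_pow, hxa, hX1, ← map_pow, ← map_pow]
    exact hkey ⟨v 0 % n₁, Nat.mod_lt _ hn₁⟩ (mkC (Polynomial.X ^ (v 1)))
  have hsurj : Function.Surjective Φ := by
    rw [← LinearMap.range_eq_top, eq_top_iff]
    rintro q -
    obtain ⟨p, rfl⟩ := Ideal.Quotient.mk_surjective (I := IA) q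
    rw [← Ideal.Quotient.mkₐ_eq_mk F IA, ← hπdef]
    induction p using MvPolynomial.induction_on' with
    | add p q hp hq => rw [map_add]; exact Submodule.add_mem _ hp hq
    | monomial v a =>
      have h2 : π (monomial v a) = a • π (monomial v 1) := by
        rw [← map_smul, MvPolynomial.smul_monomial, smul_eq_mul, mul_one]
      rw [h2]
      exact Submodule.smul_mem _ _ (hπmono v)
  calc Module.finrank F (MvPolynomial (Fin 2) F ⧸ IA)
      = Module.finrank F (LinearMap.range Φ) := by
        rw [LinearMap.range_eq_top.mpr hsurj, finrank_top]
    _ ≤ Module.finrank F (Fin n₁ → Polynomial F ⧸ IC) := LinearMap.finrank_range_le Φ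
    _ = n₁ * Module.finrank F (Polynomial F ⧸ IC) := by
        rw [Module.finrank_pi_fintype, Finset.sum_const, Finset.card_univ,
          Fintype.card_fin, smul_eq_mul]
end

section
/- (Remark after Theorem 1, 3-dimensional case) Let SA : ℕ × ℕ → Z_{n₃} ∪ {*} be a shift array with SA(i+n₁, j) = SA(i, j+n₂) = SA(i,j) for all i,j, let C : ℕ → 𝔽_q be a column sequence with C(k+n₃) = C(k) for all k, and let A be the 3-dimensional composed array defined by A(i,j,k) = C(k − SA(i,j) mod n₃) if SA(i,j) ≠ * and A(i,j,k) = 0 if SA(i,j) = *. Then L(A) ≤ n₁·n₂·L(C); i.e., the normalized linear complexity of A is at most the normalized linear complexity of C. -/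
open Finset MvPolynomial Polynomial in
private lemma mv_sum_support_subset' {F : Type*} [CommRing F]
    (f : MvPolynomial (Fin 3) F) {s : Finset (Fin 3 →₀ ℕ)} (hs : f.support ⊆ s)
    (φ : (Fin 3 →₀ ℕ) → F) :
    ∑ v ∈ f.support, f.coeff v * φ v = ∑ v ∈ s, f.coeff v * φ v := by
  refine Finset.sum_subset hs fun v _ hv => ?_
  rw [MvPolynomial.notMem_support_iff.mp hv, zero_mul]

private lemma mv_sum_support_add {F : Type*} [CommRing F]
    (f g : MvPolynomial (Fin 3) F) (φ : (Fin 3 →₀ ℕ) → F) :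
    ∑ v ∈ (f + g).support, (f + g).coeff v * φ v
      = ∑ v ∈ f.support, f.coeff v * φ v + ∑ v ∈ g.support, g.coeff v * φ v := by
  classical
  rw [mv_sum_support_subset' (f + g) (MvPolynomial.support_add) φ,
    mv_sum_support_subset' f (Finset.subset_union_left) φ,
    mv_sum_support_subset' g (Finset.subset_union_right) φ,
    ← Finset.sum_add_distrib]
  simp [MvPolynomial.coeff_add, add_mul]

private lemma mv_sum_support_monomial {F : Type*} [CommRing F]
    (u : Fin 3 →₀ ℕ) (c : F) (φ : (Fin 3 →₀ ℕ) → F) :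
    ∑ v ∈ (MvPolynomial.monomial u c).support,
        (MvPolynomial.monomial u c).coeff v * φ v = c * φ u := by
  classical
  rw [MvPolynomial.support_monomial]
  by_cases hc : c = 0
  · simp [hc]
  · simp [hc, MvPolynomial.coeff_monomial]

private lemma mv_sum_support_finsum {F : Type*} [CommRing F] {ι : Type*}
    (t : Finset ι) (p : ι → MvPolynomial (Fin 3) F) (φ : (Fin 3 →₀ ℕ) → F) :
    ∑ v ∈ (∑ i ∈ t, p i).support, (∑ i ∈ t, p i).coeff v * φ v
      = ∑ i ∈ t, ∑ v ∈ (p i).support, (p i).coeff v * φ v := by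
  classical
  induction t using Finset.induction_on with
  | empty => simp
  | insert _ _ h ih =>
      rw [Finset.sum_insert h, Finset.sum_insert h, mv_sum_support_add, ih]

set_option maxHeartbeats 1600000 in
/-- 3-dimensional case of Theorem 1: if `A` is the 3-dimensional array obtained
by composing a doubly periodic shift array `SA : ℕ × ℕ → ZMod n₃ ∪ {*}` with an
`n₃`-periodic column sequence `C` (columns with undetermined shift `*`
consisting of zeros), then `L(A) ≤ n₁ * n₂ * L(C)`, i.e. the normalized linear
complexity of `A` is at most the normalized linear complexity of `C`. -/
theorem stmt_8 {F : Type*} [Field F] [Fintype F] (n₁ n₂ n₃ : ℕ)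
    (hn₁ : 0 < n₁) (hn₂ : 0 < n₂) [NeZero n₃]
    (SA : ℕ → ℕ → Option (ZMod n₃))
    (hSA₁ : ∀ i j : ℕ, SA (i + n₁) j = SA i j)
    (hSA₂ : ∀ i j : ℕ, SA i (j + n₂) = SA i j)
    (C : ℕ → F) (hC : ∀ k : ℕ, C (k + n₃) = C k)
    (A : ℕ → ℕ → ℕ → F)
    (hA : ∀ i j k : ℕ,
      A i j k = (SA i j).elim 0 (fun s => C (((k : ZMod n₃) - s).val)))
    (IC : Ideal (Polynomial F))
    (hIC : ∀ g : Polynomial F,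
      g ∈ IC ↔ ∀ β : ℕ, ∑ k ∈ g.support, g.coeff k * C (k + β) = 0)
    (IA : Ideal (MvPolynomial (Fin 3) F))
    (hIA : ∀ f : MvPolynomial (Fin 3) F,
      f ∈ IA ↔ ∀ β₁ β₂ β₃ : ℕ,
        ∑ v ∈ f.support, f.coeff v * A (v 0 + β₁) (v 1 + β₂) (v 2 + β₃) = 0) :
    Module.finrank F (MvPolynomial (Fin 3) F ⧸ IA) ≤
      n₁ * n₂ * Module.finrank F (Polynomial F ⧸ IC) := by
  classical
  have hn₃ : 0 < n₃ := Nat.pos_of_ne_zero (NeZero.ne n₃)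
  -- periodicity of C
  have Cper : ∀ t a : ℕ, C (a + n₃ * t) = C a := by
    intro t
    induction t with
    | zero => simp
    | succ t ih =>
        intro a
        have : a + n₃ * (t + 1) = (a + n₃ * t) + n₃ := by ring
        rw [this, hC, ih]
  have Cmod : ∀ m : ℕ, C m = C (m % n₃) := by
    intro m
    conv_lhs => rw [← Nat.mod_add_div m n₃]
    rw [Cper]
  -- X^{n₃} - 1 ∈ IC
  have hXC : (Polynomial.X ^ n₃ - 1 : Polynomial F) ∈ IC := by
    rw [hIC]
    intro β
    have hsub : (Polynomial.X ^ n₃ - 1 : Polynomial F).support ⊆ {n₃, 0} := by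
      intro v hv
      simp only [Polynomial.mem_support_iff] at hv
      by_contra hvn
      simp only [Finset.mem_insert, Finset.mem_singleton, not_or] at hvn
      apply hv
      simp [Polynomial.coeff_sub, Polynomial.coeff_X_pow, Polynomial.coeff_one,
        hvn.1, hvn.2, Ne.symm hvn.1, Ne.symm hvn.2]
    rw [Finset.sum_subset hsub (fun v _ hv => by
      rw [Polynomial.notMem_support_iff.mp hv, zero_mul])]
    have hne : n₃ ≠ 0 := hn₃.ne'
    rw [Finset.sum_insert (by simp [hne]), Finset.sum_singleton]
    have e1 : (Polynomial.X ^ n₃ - 1 : Polynomial F).coeff n₃ = 1 := by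
      simp [Polynomial.coeff_X_pow, Polynomial.coeff_one, hne, Ne.symm hne]
    have e2 : (Polynomial.X ^ n₃ - 1 : Polynomial F).coeff 0 = -1 := by
      simp [Polynomial.coeff_X_pow, Polynomial.coeff_one, hne, Ne.symm hne]
    rw [e1, e2, show n₃ + β = β + n₃ from by ring, hC]
    ring
  -- key membership lemma in IA
  set R := MvPolynomial (Fin 3) F with hR
  have u_apply : ∀ i j k : ℕ,
      ((Finsupp.single (0 : Fin 3) i + Finsupp.single 1 j + Finsupp.single 2 k : Fin 3 →₀ ℕ) 0 = i)
      ∧ ((Finsupp.single (0 : Fin 3) i + Finsupp.single 1 j + Finsupp.single 2 k : Fin 3 →₀ ℕ) 1 = j)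
      ∧ ((Finsupp.single (0 : Fin 3) i + Finsupp.single 1 j + Finsupp.single 2 k : Fin 3 →₀ ℕ) 2 = k) := by
    intro i j k
    refine ⟨?_, ?_, ?_⟩ <;> simp [Finsupp.single_apply]
  have key_decomp : ∀ (g : Polynomial F) (i j : ℕ),
      (MvPolynomial.X 0 ^ i * MvPolynomial.X 1 ^ j *
        Polynomial.aeval (MvPolynomial.X 2) g : R)
      = ∑ k ∈ g.support, MvPolynomial.monomial
          (Finsupp.single (0 : Fin 3) i + Finsupp.single 1 j + Finsupp.single 2 k)
          (g.coeff k) := by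
    intro g i j
    rw [Polynomial.aeval_def, Polynomial.eval₂_eq_sum, Polynomial.sum, Finset.mul_sum]
    refine Finset.sum_congr rfl fun k _ => ?_
    rw [show (algebraMap F R) (g.coeff k) = MvPolynomial.C (g.coeff k) from rfl]
    simp only [MvPolynomial.X_pow_eq_monomial, MvPolynomial.C_apply,
      MvPolynomial.monomial_mul, one_mul, mul_one, zero_add]
  have keyIA : ∀ (g : Polynomial F), g ∈ IC → ∀ i j : ℕ,
      (MvPolynomial.X 0 ^ i * MvPolynomial.X 1 ^ j *
        Polynomial.aeval (MvPolynomial.X 2) g : R) ∈ IA := by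
    intro g hg i j
    rw [hIA]
    intro β₁ β₂ β₃
    rw [key_decomp, mv_sum_support_finsum]
    have hterm : ∀ k : ℕ, ∑ v ∈ (MvPolynomial.monomial
          (Finsupp.single (0 : Fin 3) i + Finsupp.single 1 j + Finsupp.single 2 k)
          (g.coeff k)).support,
        (MvPolynomial.monomial
          (Finsupp.single (0 : Fin 3) i + Finsupp.single 1 j + Finsupp.single 2 k)
          (g.coeff k)).coeff v * A (v 0 + β₁) (v 1 + β₂) (v 2 + β₃)
        = g.coeff k * A (i + β₁) (j + β₂) (k + β₃) := by
      intro k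
      rw [mv_sum_support_monomial]
      rw [(u_apply i j k).1, (u_apply i j k).2.1, (u_apply i j k).2.2]
    simp only [hterm]
    -- now case on SA (i+β₁) (j+β₂)
    rcases hSA : SA (i + β₁) (j + β₂) with _ | s
    · simp [hA, hSA]
    · have hAval : ∀ k : ℕ, A (i + β₁) (j + β₂) (k + β₃)
          = C (k + ((β₃ : ZMod n₃) - s).val) := by
        intro k
        rw [hA, hSA]
        simp only [Option.elim]
        have hz : ((k + β₃ : ℕ) : ZMod n₃) - s = (k : ZMod n₃) + ((β₃ : ZMod n₃) - s) := by
          push_cast; ring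
        rw [hz, ZMod.val_add, ZMod.val_natCast, Nat.mod_add_mod, ← Cmod]
      simp only [hAval]
      exact (hIC g).mp hg (((β₃ : ZMod n₃) - s).val)
  -- X₀^{n₁} - 1 and X₁^{n₂} - 1 ∈ IA
  have bin_mem : ∀ (u : Fin 3 →₀ ℕ), u ≠ 0 →
      (∀ β₁ β₂ β₃ : ℕ, A (u 0 + β₁) (u 1 + β₂) (u 2 + β₃) = A β₁ β₂ β₃) →
      (MvPolynomial.monomial u 1 - 1 : R) ∈ IA := by
    intro u hu hper
    rw [hIA]
    intro β₁ β₂ β₃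
    have h1 : (1 : R) = MvPolynomial.monomial 0 1 := by
      rw [← MvPolynomial.C_apply, MvPolynomial.C_1]
    have hdiff : (MvPolynomial.monomial u 1 - 1 : R)
        = MvPolynomial.monomial u 1 + MvPolynomial.monomial 0 (-1 : F) := by
      rw [sub_eq_add_neg, h1, ← map_neg]
    rw [hdiff, mv_sum_support_add, mv_sum_support_monomial, mv_sum_support_monomial]
    simp only [Finsupp.coe_zero, Pi.zero_apply, zero_add, hper]
    ring
  have hX0 : (MvPolynomial.X 0 ^ n₁ - 1 : R) ∈ IA := by
    rw [MvPolynomial.X_pow_eq_monomial]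
    refine bin_mem _ ?_ ?_
    · simp [Finsupp.single_eq_zero, hn₁.ne']
    · intro β₁ β₂ β₃
      have h0 : (Finsupp.single (0 : Fin 3) n₁) 0 = n₁ := by simp
      have h1 : (Finsupp.single (0 : Fin 3) n₁) 1 = 0 := by
        simp [Finsupp.single_apply]
      have h2 : (Finsupp.single (0 : Fin 3) n₁) 2 = 0 := by
        simp [Finsupp.single_apply]
      rw [h0, h1, h2, zero_add, zero_add, hA, hA]
      rw [show n₁ + β₁ = β₁ + n₁ from by ring, hSA₁]
  have hX1 : (MvPolynomial.X 1 ^ n₂ - 1 : R) ∈ IA := by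
    rw [MvPolynomial.X_pow_eq_monomial]
    refine bin_mem _ ?_ ?_
    · simp [Finsupp.single_eq_zero, hn₂.ne']
    · intro β₁ β₂ β₃
      have h0 : (Finsupp.single (1 : Fin 3) n₂) 0 = 0 := by
        simp [Finsupp.single_apply]
      have h1 : (Finsupp.single (1 : Fin 3) n₂) 1 = n₂ := by simp
      have h2 : (Finsupp.single (1 : Fin 3) n₂) 2 = 0 := by
        simp [Finsupp.single_apply]
      rw [h0, h1, h2, zero_add, zero_add, hA, hA]
      rw [show n₂ + β₂ = β₂ + n₂ from by ring, hSA₂]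
  -- quotient maps
  set Z := Polynomial F ⧸ IC with hZ
  let piC : Polynomial F →ₐ[F] Z := Ideal.Quotient.mkₐ F IC
  let piA : R →ₐ[F] (R ⧸ IA) := Ideal.Quotient.mkₐ F IA
  have piC_surj : Function.Surjective piC := Ideal.Quotient.mkₐ_surjective F IC
  have piA_surj : Function.Surjective piA := Ideal.Quotient.mkₐ_surjective F IA
  have hXn₃ : piC (Polynomial.X ^ n₃) = 1 := by
    have := Ideal.Quotient.eq_zero_iff_mem.mpr hXC
    rw [← Ideal.Quotient.mkₐ_eq_mk F, map_sub, map_one, sub_eq_zero] at this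
    exact this
  -- Z is spanned by powers of X below n₃
  have key_span : ∀ k : ℕ, piC (Polynomial.X ^ k) ∈
      Submodule.span F (Set.range fun l : Fin n₃ => piC (Polynomial.X ^ (l : ℕ))) := by
    intro k
    induction k using Nat.strong_induction_on with
    | _ k ih =>
      by_cases hk : k < n₃
      · exact Submodule.subset_span ⟨⟨k, hk⟩, rfl⟩
      · push_neg at hk
        have hsplit : (Polynomial.X ^ k : Polynomial F) = Polynomial.X ^ (k - n₃) * Polynomial.X ^ n₃ := by
          rw [← pow_add]
          congr 1
          omega
        rw [hsplit, map_mul, hXn₃, mul_one]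
        exact ih (k - n₃) (by omega)
  have span_topC : Submodule.span F
      (Set.range fun l : Fin n₃ => piC (Polynomial.X ^ (l : ℕ))) = ⊤ := by
    rw [eq_top_iff]
    rintro z -
    obtain ⟨p, rfl⟩ := piC_surj z
    rw [show piC p = ∑ k ∈ p.support, piC (Polynomial.monomial k (p.coeff k)) from by
      rw [← map_sum]; exact congrArg piC (Polynomial.as_sum_support p)]
    refine Submodule.sum_mem _ fun k _ => ?_
    have hmono : (Polynomial.monomial k) (p.coeff k) = p.coeff k • Polynomial.X ^ k :=
      (Polynomial.smul_X_eq_monomial).symm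
    rw [hmono, map_smul]
    exact Submodule.smul_mem _ _ (key_span k)
  have finZ : Module.Finite F Z :=
    ⟨Submodule.fg_def.mpr ⟨_, Set.finite_range _, span_topC⟩⟩
  -- basis of Z
  set d := Module.finrank F Z with hd
  let b : Module.Basis (Fin d) F Z := Module.finBasis F Z
  -- lifts of basis vectors
  have hlift : ∀ l : Fin d, ∃ p : Polynomial F, piC p = b l := fun l => piC_surj (b l)
  choose g hg using hlift
  -- the spanning family of R ⧸ IA
  let G : Fin n₁ × Fin n₂ × Fin d → R ⧸ IA := fun t =>
    piA (MvPolynomial.X 0 ^ (t.1 : ℕ) * MvPolynomial.X 1 ^ (t.2.1 : ℕ) *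
      Polynomial.aeval (MvPolynomial.X 2) (g t.2.2))
  have hX0pow : piA (MvPolynomial.X 0) ^ n₁ = 1 := by
    have := Ideal.Quotient.eq_zero_iff_mem.mpr hX0
    rw [← Ideal.Quotient.mkₐ_eq_mk F, map_sub, map_one, map_pow, sub_eq_zero] at this
    exact this
  have hX1pow : piA (MvPolynomial.X 1) ^ n₂ = 1 := by
    have := Ideal.Quotient.eq_zero_iff_mem.mpr hX1
    rw [← Ideal.Quotient.mkₐ_eq_mk F, map_sub, map_one, map_pow, sub_eq_zero] at this
    exact this
  have hmodpow : ∀ (x : R ⧸ IA) (n i : ℕ), 0 < n → x ^ n = 1 → x ^ i = x ^ (i % n) := by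
    intro x n i hn hx
    conv_lhs => rw [← Nat.mod_add_div i n]
    rw [pow_add, pow_mul, hx, one_pow, mul_one]
  -- the main span claim
  have main_mem : ∀ (i j k : ℕ), i < n₁ → j < n₂ →
      piA (MvPolynomial.X 0 ^ i * MvPolynomial.X 1 ^ j * MvPolynomial.X 2 ^ k) ∈
        Submodule.span F (Set.range G) := by
    intro i j k hi hj
    set r := b.repr (piC (Polynomial.X ^ k)) with hr
    set p : Polynomial F := ∑ l : Fin d, r l • g l with hp
    have hpic : piC p = piC (Polynomial.X ^ k) := by
      rw [hp, map_sum]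
      simp_rw [map_smul, hg]
      exact b.sum_repr (piC (Polynomial.X ^ k))
    have hmem : Polynomial.X ^ k - p ∈ IC := by
      rw [← Ideal.Quotient.eq]
      have h1 : Ideal.Quotient.mk IC (Polynomial.X ^ k) = piC (Polynomial.X ^ k) := rfl
      have h2 : Ideal.Quotient.mk IC p = piC p := rfl
      rw [h1, h2, hpic]
    have hin := keyIA _ hmem i j
    have hzero := Ideal.Quotient.eq_zero_iff_mem.mpr hin
    rw [← Ideal.Quotient.mkₐ_eq_mk F] at hzero
    have hsplit : (MvPolynomial.X 0 ^ i * MvPolynomial.X 1 ^ j *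
        Polynomial.aeval (MvPolynomial.X 2) (Polynomial.X ^ k - p) : R)
        = MvPolynomial.X 0 ^ i * MvPolynomial.X 1 ^ j * MvPolynomial.X 2 ^ k
          - MvPolynomial.X 0 ^ i * MvPolynomial.X 1 ^ j *
            Polynomial.aeval (MvPolynomial.X 2) p := by
      rw [map_sub, map_pow, Polynomial.aeval_X, mul_sub]
    rw [hsplit, map_sub, sub_eq_zero] at hzero
    rw [show piA (MvPolynomial.X 0 ^ i * MvPolynomial.X 1 ^ j * MvPolynomial.X 2 ^ k)
      = piA (MvPolynomial.X 0 ^ i * MvPolynomial.X 1 ^ j *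
          Polynomial.aeval (MvPolynomial.X 2) p) from hzero]
    rw [hp, map_sum, Finset.mul_sum, map_sum]
    refine Submodule.sum_mem _ fun l _ => ?_
    have : (MvPolynomial.X 0 ^ i * MvPolynomial.X 1 ^ j *
        Polynomial.aeval (MvPolynomial.X 2) (r l • g l) : R)
        = r l • (MvPolynomial.X 0 ^ i * MvPolynomial.X 1 ^ j *
            Polynomial.aeval (MvPolynomial.X 2) (g l)) := by
      rw [map_smul, mul_smul_comm]
    rw [this, map_smul]
    exact Submodule.smul_mem _ _
      (Submodule.subset_span ⟨(⟨i, hi⟩, ⟨j, hj⟩, l), rfl⟩)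
  have span_topA : Submodule.span F (Set.range G) = ⊤ := by
    rw [eq_top_iff]
    rintro z -
    obtain ⟨f, rfl⟩ := piA_surj z
    rw [show piA f = ∑ v ∈ f.support, piA (MvPolynomial.monomial v (MvPolynomial.coeff v f)) from by
      rw [← map_sum]; exact congrArg piA (MvPolynomial.support_sum_monomial_coeff f).symm]
    refine Submodule.sum_mem _ fun v _ => ?_
    have hv : v = Finsupp.single (0 : Fin 3) (v 0) + Finsupp.single 1 (v 1)
        + Finsupp.single 2 (v 2) := by
      ext a
      fin_cases a <;> simp [Finsupp.single_apply]
    have hXmul : (MvPolynomial.X 0 ^ (v 0) * MvPolynomial.X 1 ^ (v 1)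
          * MvPolynomial.X 2 ^ (v 2) : R) = MvPolynomial.monomial v 1 := by
      rw [MvPolynomial.X_pow_eq_monomial, MvPolynomial.X_pow_eq_monomial,
        MvPolynomial.X_pow_eq_monomial, MvPolynomial.monomial_mul,
        MvPolynomial.monomial_mul, ← hv]
      norm_num
    have hmono : MvPolynomial.monomial v (MvPolynomial.coeff v f)
        = MvPolynomial.coeff v f •
          (MvPolynomial.X 0 ^ (v 0) * MvPolynomial.X 1 ^ (v 1) * MvPolynomial.X 2 ^ (v 2) : R) := by
      rw [hXmul, MvPolynomial.smul_monomial, smul_eq_mul, mul_one]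
    rw [hmono, map_smul]
    refine Submodule.smul_mem _ _ ?_
    -- reduce exponents modulo n₁, n₂
    have hred : piA (MvPolynomial.X 0 ^ (v 0) * MvPolynomial.X 1 ^ (v 1)
          * MvPolynomial.X 2 ^ (v 2) : R)
        = piA (MvPolynomial.X 0 ^ (v 0 % n₁) * MvPolynomial.X 1 ^ (v 1 % n₂)
          * MvPolynomial.X 2 ^ (v 2) : R) := by
      simp only [map_mul, map_pow]
      rw [hmodpow _ n₁ (v 0) hn₁ hX0pow, hmodpow _ n₂ (v 1) hn₂ hX1pow]
    rw [hred]
    exact main_mem _ _ _ (Nat.mod_lt _ hn₁) (Nat.mod_lt _ hn₂)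
  -- conclude
  have hcard := finrank_range_le_card (R := F) G
  rw [Set.finrank, span_topA, finrank_top] at hcard
  calc Module.finrank F (R ⧸ IA) ≤ Fintype.card (Fin n₁ × Fin n₂ × Fin d) := hcard
    _ = n₁ * n₂ * d := by simp [Fintype.card_prod, mul_assoc]
end

section
/- (Proposition 2) Let S : ℕ → Z_{n₂} be a shift sequence with S(i+n₁) = S(i) for all i (with no undetermined entries), let C : ℕ → 𝔽_q be a column sequence with C(j+n₂) = C(j) for all j and minimal polynomial m(y) (the monic generator of the ideal Val(C)), and let A be the 2-dimensional composed array defined by A(i,j) = C(j − S(i) mod n₂). If y − 1 divides m(y), then L(A) ≤ n₁·deg(m) − (n₁ − 1); equivalently, the normalized linear complexity satisfies L(A)/(n₁n₂) ≤ L(C)/n₂ − (n₁−1)/(n₁n₂). -/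
open Polynomial Finset

namespace Stmt9Aux

variable {F : Type*} [Field F]

omit [Field F] in
lemma per (n₂ : ℕ) (C : ℕ → F) (hC : ∀ j, C (j + n₂) = C j) (j t : ℕ) :
    C (j + n₂ * t) = C j := by
  induction t with
  | zero => simp
  | succ t ih =>
    have : j + n₂ * (t + 1) = (j + n₂ * t) + n₂ := by ring
    rw [this, hC, ih]

omit [Field F] in
lemma C_mod (n₂ : ℕ) (C : ℕ → F) (hC : ∀ j, C (j + n₂) = C j) (k : ℕ) :
    C k = C (k % n₂) := by
  conv_lhs => rw [← Nat.mod_add_div k n₂]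
  exact per n₂ C hC _ _

omit [Field F] in
lemma C_congr (n₂ : ℕ) (C : ℕ → F) (hC : ∀ j, C (j + n₂) = C j) {k l : ℕ}
    (h : (k : ZMod n₂) = (l : ZMod n₂)) : C k = C l := by
  rw [C_mod n₂ C hC k, C_mod n₂ C hC l,
    (ZMod.natCast_eq_natCast_iff' k l n₂).mp h]

lemma sum_support_eq (p : Polynomial F) (g : ℕ → F) :
    ∑ j ∈ p.support, p.coeff j * g j
      = ∑ j ∈ Finset.range (p.natDegree + 1), p.coeff j * g j := by
  refine Finset.sum_subset p.supp_subset_range_natDegree_succ ?_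
  intro j _ hj
  rw [Polynomial.notMem_support_iff.mp hj, zero_mul]

noncomputable def e (a b : ℕ) : Fin 2 →₀ ℕ := Finsupp.single 0 a + Finsupp.single 1 b

@[simp] lemma e_apply0 (a b : ℕ) : e a b 0 = a := by simp [e, Finsupp.single_apply]
@[simp] lemma e_apply1 (a b : ℕ) : e a b 1 = b := by simp [e, Finsupp.single_apply]

lemma e_add (a b a' b' : ℕ) : e a b + e a' b' = e (a + a') (b + b') := by
  simp [e, Finsupp.single_add]
  abel

lemma fin2_eq (v : Fin 2 →₀ ℕ) : v = e (v 0) (v 1) := by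
  ext i
  fin_cases i <;> simp [e, Finsupp.single_apply]

noncomputable def mon (F : Type*) [CommSemiring F] (a b : ℕ) : MvPolynomial (Fin 2) F :=
  MvPolynomial.monomial (e a b) 1

noncomputable def Emb2 (a b : ℕ) (p : Polynomial F) : MvPolynomial (Fin 2) F :=
  ∑ j ∈ Finset.range (p.natDegree + 1),
    MvPolynomial.monomial (e a (b + j)) (p.coeff j)

lemma mon_mul_mon (a b a' b' : ℕ) :
    mon F a b * mon F a' b' = mon F (a + a') (b + b') := by
  simp [mon, MvPolynomial.monomial_mul, e_add]

lemma mon_mul_Emb2 (a b a' b' : ℕ) (p : Polynomial F) :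
    mon F a b * Emb2 a' b' p = Emb2 (a + a') (b + b') p := by
  rw [Emb2, Emb2, Finset.mul_sum]
  refine Finset.sum_congr rfl fun j _ => ?_
  rw [mon, MvPolynomial.monomial_mul, e_add, one_mul, add_assoc]

noncomputable def LMap (A : ℕ → ℕ → F) (β₁ β₂ : ℕ) : MvPolynomial (Fin 2) F →ₗ[F] F :=
  Finsupp.linearCombination F (fun v : Fin 2 →₀ ℕ => A (v 0 + β₁) (v 1 + β₂)) ∘ₗ
    (AddMonoidAlgebra.coeffLinearEquiv F).toLinearMap

lemma L_apply (A : ℕ → ℕ → F) (β₁ β₂ : ℕ) (f : MvPolynomial (Fin 2) F) :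
    LMap A β₁ β₂ f = ∑ v ∈ f.support, f.coeff v * A (v 0 + β₁) (v 1 + β₂) := by
  rfl

lemma L_monomial (A : ℕ → ℕ → F) (β₁ β₂ : ℕ) (v : Fin 2 →₀ ℕ) (c : F) :
    LMap A β₁ β₂ (MvPolynomial.monomial v c) = c * A (v 0 + β₁) (v 1 + β₂) := by
  rw [← MvPolynomial.single_eq_monomial, LMap]
  exact Finsupp.linearCombination_single F _ _

lemma L_Emb2 (A : ℕ → ℕ → F) (β₁ β₂ a b : ℕ) (p : Polynomial F) :
    LMap A β₁ β₂ (Emb2 a b p)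
      = ∑ j ∈ Finset.range (p.natDegree + 1),
          p.coeff j * A (a + β₁) (b + j + β₂) := by
  rw [Emb2, map_sum]
  refine Finset.sum_congr rfl fun j _ => ?_
  rw [L_monomial]
  simp

end Stmt9Aux

open Stmt9Aux in
/-- Proposition 2: let `A` be the 2-dimensional array obtained by composing an
`n₁`-periodic shift sequence `S : ℕ → ZMod n₂` (no undetermined entries) with
an `n₂`-periodic column sequence `C` whose minimal polynomial is `m(y)`.
If `y - 1` divides `m(y)`, then `L(A) ≤ n₁ * deg m - (n₁ - 1)`, i.e.
`L(A)/(n₁n₂) ≤ L(C)/n₂ - (n₁-1)/(n₁n₂)`. -/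
theorem stmt_9 {F : Type*} [Field F] [Fintype F] (n₁ n₂ : ℕ)
    (hn₁ : 0 < n₁) [NeZero n₂]
    (S : ℕ → ZMod n₂) (hS : ∀ i : ℕ, S (i + n₁) = S i)
    (C : ℕ → F) (hC : ∀ j : ℕ, C (j + n₂) = C j)
    (A : ℕ → ℕ → F)
    (hA : ∀ i j : ℕ, A i j = C (((j : ZMod n₂) - S i).val))
    (IC : Ideal (Polynomial F))
    (hIC : ∀ g : Polynomial F,
      g ∈ IC ↔ ∀ β : ℕ, ∑ j ∈ g.support, g.coeff j * C (j + β) = 0)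
    (m : Polynomial F) (hmonic : m.Monic) (hgen : IC = Ideal.span {m})
    (hdiv : (Polynomial.X - 1 : Polynomial F) ∣ m)
    (IA : Ideal (MvPolynomial (Fin 2) F))
    (hIA : ∀ f : MvPolynomial (Fin 2) F,
      f ∈ IA ↔ ∀ β₁ β₂ : ℕ,
        ∑ v ∈ f.support, f.coeff v * A (v 0 + β₁) (v 1 + β₂) = 0) :
    Module.finrank F (MvPolynomial (Fin 2) F ⧸ IA) ≤
      n₁ * m.natDegree - (n₁ - 1) := by
  classical
  obtain ⟨u, hu⟩ := hdiv
  have hmX : (Polynomial.X - 1 : Polynomial F).Monic := by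
    simpa using Polynomial.monic_X_sub_C (1 : F)
  have humonic : u.Monic := hmX.of_mul_monic_left (hu ▸ hmonic)
  have hd : m.natDegree = u.natDegree + 1 := by
    rw [hu, Polynomial.natDegree_mul hmX.ne_zero humonic.ne_zero]
    have : (Polynomial.X - 1 : Polynomial F) = Polynomial.X - Polynomial.C 1 := by
      rw [Polynomial.C_1]
    rw [this, Polynomial.natDegree_X_sub_C, add_comm]
  -- the three annihilating polynomials
  have hAC : ∀ i j β₂ : ℕ, A i (j + β₂) = C (j + ((β₂ : ZMod n₂) - S i).val) := by
    intro i j β₂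
    rw [hA]
    refine Stmt9Aux.C_congr n₂ C hC ?_
    push_cast [ZMod.natCast_val, ZMod.cast_id]
    ring
  have hm0 : ∀ β : ℕ,
      ∑ j ∈ Finset.range (m.natDegree + 1), m.coeff j * C (j + β) = 0 := by
    intro β
    have hmIC : m ∈ IC := hgen ▸ Ideal.mem_span_singleton_self m
    have := (hIC m).mp hmIC β
    rwa [Stmt9Aux.sum_support_eq] at this
  -- D is constant
  have hstep : ∀ β : ℕ,
      ∑ j ∈ Finset.range (u.natDegree + 1), u.coeff j * C (j + (β + 1))
        = ∑ j ∈ Finset.range (u.natDegree + 1), u.coeff j * C (j + β) := by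
    intro β
    have hm' : m = Polynomial.X * u - u := by rw [hu]; ring
    have h0 := hm0 β
    have hsplit : ∀ j : ℕ, m.coeff j = (Polynomial.X * u).coeff j - u.coeff j := by
      intro j; rw [hm', Polynomial.coeff_sub]
    simp only [hsplit, sub_mul] at h0
    rw [Finset.sum_sub_distrib] at h0
    have hS1 : ∑ j ∈ Finset.range (m.natDegree + 1), (Polynomial.X * u).coeff j * C (j + β)
        = ∑ j ∈ Finset.range (u.natDegree + 1), u.coeff j * C (j + (β + 1)) := by
      have hd1 : m.natDegree + 1 = (u.natDegree + 1) + 1 := by omega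
      rw [hd1, Finset.sum_range_succ']
      simp only [Polynomial.coeff_X_mul, Polynomial.mul_coeff_zero,
        Polynomial.coeff_X_zero, zero_mul, add_zero]
      refine Finset.sum_congr rfl fun j _ => ?_
      have hj : j + 1 + β = j + (β + 1) := by omega
      rw [hj]
    have hS2 : ∑ j ∈ Finset.range (m.natDegree + 1), u.coeff j * C (j + β)
        = ∑ j ∈ Finset.range (u.natDegree + 1), u.coeff j * C (j + β) := by
      rw [hd, Finset.sum_range_succ,
        Polynomial.coeff_eq_zero_of_natDegree_lt (Nat.lt_succ_self _), zero_mul, add_zero]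
    rw [hS1, hS2] at h0
    exact sub_eq_zero.mp h0
  have hconst : ∀ β : ℕ,
      ∑ j ∈ Finset.range (u.natDegree + 1), u.coeff j * C (j + β)
        = ∑ j ∈ Finset.range (u.natDegree + 1), u.coeff j * C (j + 0) := by
    intro β
    induction β with
    | zero => rfl
    | succ n ih => rw [hstep n, ih]
  -- membership of the three generators
  have hg1 : mon F n₁ 0 - mon F 0 0 ∈ IA := by
    rw [hIA]
    intro β₁ β₂
    rw [← Stmt9Aux.L_apply, Stmt9Aux.mon, Stmt9Aux.mon, map_sub,
      Stmt9Aux.L_monomial, Stmt9Aux.L_monomial]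
    have h1 : S (n₁ + β₁) = S β₁ := by rw [add_comm]; exact hS β₁
    simp [hA, h1]
  have hg2 : Emb2 0 0 m ∈ IA := by
    rw [hIA]
    intro β₁ β₂
    rw [← Stmt9Aux.L_apply, Stmt9Aux.L_Emb2]
    calc ∑ j ∈ Finset.range (m.natDegree + 1), m.coeff j * A (0 + β₁) (0 + j + β₂)
        = ∑ j ∈ Finset.range (m.natDegree + 1),
            m.coeff j * C (j + ((β₂ : ZMod n₂) - S β₁).val) := by
          refine Finset.sum_congr rfl fun j _ => ?_
          rw [zero_add, zero_add, hAC]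
      _ = 0 := hm0 _
  have hg3 : Emb2 1 0 u - Emb2 0 0 u ∈ IA := by
    rw [hIA]
    intro β₁ β₂
    rw [← Stmt9Aux.L_apply, map_sub, Stmt9Aux.L_Emb2, Stmt9Aux.L_Emb2]
    have e1 : ∑ j ∈ Finset.range (u.natDegree + 1), u.coeff j * A (1 + β₁) (0 + j + β₂)
        = ∑ j ∈ Finset.range (u.natDegree + 1),
            u.coeff j * C (j + ((β₂ : ZMod n₂) - S (1 + β₁)).val) := by
      refine Finset.sum_congr rfl fun j _ => ?_
      rw [zero_add, hAC]
    have e2 : ∑ j ∈ Finset.range (u.natDegree + 1), u.coeff j * A (0 + β₁) (0 + j + β₂)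
        = ∑ j ∈ Finset.range (u.natDegree + 1),
            u.coeff j * C (j + ((β₂ : ZMod n₂) - S β₁).val) := by
      refine Finset.sum_congr rfl fun j _ => ?_
      rw [zero_add, zero_add, hAC]
    rw [e1, e2, hconst, hconst (((β₂ : ZMod n₂) - S β₁).val), sub_self]
  -- the spanning set
  set T : Finset (ℕ × ℕ) :=
    ((Finset.range n₁) ×ˢ (Finset.range m.natDegree)).filter
      (fun p => p.1 = 0 ∨ p.2 + 1 < m.natDegree) with hT
  set Wsrc : Set (MvPolynomial (Fin 2) F) :=
    (fun p : ℕ × ℕ => mon F p.1 p.2) '' ↑T with hWsrc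
  set U : Submodule F (MvPolynomial (Fin 2) F) :=
    Submodule.span F Wsrc ⊔ Submodule.restrictScalars F IA with hU
  have hIAU : ∀ f : MvPolynomial (Fin 2) F, f ∈ IA → f ∈ U := by
    intro f hf
    exact Submodule.mem_sup_right hf
  have key : ∀ a b : ℕ, mon F a b ∈ U := by
    intro a
    induction a using Nat.strong_induction_on with
    | _ a iha =>
      intro b
      induction b using Nat.strong_induction_on with
      | _ b ihb =>
        by_cases h1 : n₁ ≤ a
        · have hmul : mon F (a - n₁) b * (mon F n₁ 0 - mon F 0 0)
              = mon F a b - mon F (a - n₁) b := by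
            rw [mul_sub, Stmt9Aux.mon_mul_mon, Stmt9Aux.mon_mul_mon]
            simp only [add_zero, Nat.sub_add_cancel h1]
          have hmem : mon F a b - mon F (a - n₁) b ∈ IA :=
            hmul ▸ Ideal.mul_mem_left _ _ hg1
          have : mon F a b = (mon F a b - mon F (a - n₁) b) + mon F (a - n₁) b := by
            ring
          rw [this]
          exact Submodule.add_mem _ (hIAU _ hmem) (iha (a - n₁) (by omega) b)
        · push_neg at h1
          by_cases h2 : m.natDegree ≤ b
          · have hmul : mon F a (b - m.natDegree) * Emb2 0 0 m
                = Emb2 a (b - m.natDegree) m := by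
              rw [Stmt9Aux.mon_mul_Emb2, add_zero, add_zero]
            have hexp : Emb2 a (b - m.natDegree) m
                = (∑ j ∈ Finset.range m.natDegree,
                    MvPolynomial.monomial (e a (b - m.natDegree + j)) (m.coeff j))
                  + mon F a b := by
              rw [Emb2, Finset.sum_range_succ, hmonic.coeff_natDegree,
                Nat.sub_add_cancel h2]
              rfl
            have hsum : (∑ j ∈ Finset.range m.natDegree,
                MvPolynomial.monomial (e a (b - m.natDegree + j)) (m.coeff j)) ∈ U := by
              refine Submodule.sum_mem _ fun j hj => ?_
              have hj' : j < m.natDegree := Finset.mem_range.mp hj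
              have : MvPolynomial.monomial (e a (b - m.natDegree + j)) (m.coeff j)
                  = m.coeff j • mon F a (b - m.natDegree + j) := by
                simp [Stmt9Aux.mon, MvPolynomial.smul_monomial]
              rw [this]
              exact Submodule.smul_mem _ _ (ihb (b - m.natDegree + j) (by omega))
            have heq : mon F a b = mon F a (b - m.natDegree) * Emb2 0 0 m
                - ∑ j ∈ Finset.range m.natDegree,
                    MvPolynomial.monomial (e a (b - m.natDegree + j)) (m.coeff j) := by
              rw [hmul, hexp]; ring
            rw [heq]
            exact Submodule.sub_mem _ (hIAU _ (Ideal.mul_mem_left _ _ hg2)) hsum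
          · push_neg at h2
            by_cases h3 : a = 0 ∨ b + 1 < m.natDegree
            · refine Submodule.mem_sup_left (Submodule.subset_span ?_)
              exact ⟨(a, b), by
                simp only [hT, Finset.coe_filter, Finset.mem_coe, Set.mem_setOf_eq,
                  Finset.mem_product, Finset.mem_range]
                exact ⟨⟨h1, h2⟩, h3⟩, rfl⟩
            · push_neg at h3
              obtain ⟨ha0, hb1⟩ := h3
              have hbu : b = u.natDegree := by omega
              have hmul : mon F (a - 1) 0 * (Emb2 1 0 u - Emb2 0 0 u)
                  = Emb2 a 0 u - Emb2 (a - 1) 0 u := by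
                rw [mul_sub, Stmt9Aux.mon_mul_Emb2, Stmt9Aux.mon_mul_Emb2]
                simp only [add_zero, Nat.sub_add_cancel (Nat.one_le_iff_ne_zero.mpr ha0)]
              have hexp : Emb2 a 0 u
                  = (∑ j ∈ Finset.range u.natDegree,
                      MvPolynomial.monomial (e a j) (u.coeff j)) + mon F a b := by
                rw [Emb2, Finset.sum_range_succ, humonic.coeff_natDegree]
                simp only [zero_add, hbu]
                rfl
              have hsum1 : (∑ j ∈ Finset.range u.natDegree,
                  MvPolynomial.monomial (e a j) (u.coeff j)) ∈ U := by
                refine Submodule.sum_mem _ fun j hj => ?_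
                have hj' : j < u.natDegree := Finset.mem_range.mp hj
                have : MvPolynomial.monomial (e a j) (u.coeff j)
                    = u.coeff j • mon F a j := by
                  simp [Stmt9Aux.mon, MvPolynomial.smul_monomial]
                rw [this]
                exact Submodule.smul_mem _ _ (ihb j (by omega))
              have hsum2 : Emb2 (a - 1) 0 u ∈ U := by
                rw [Emb2]
                refine Submodule.sum_mem _ fun j _ => ?_
                have : MvPolynomial.monomial (e (a - 1) (0 + j)) (u.coeff j)
                    = u.coeff j • mon F (a - 1) (0 + j) := by
                  simp [Stmt9Aux.mon, MvPolynomial.smul_monomial]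
                rw [this]
                exact Submodule.smul_mem _ _ (iha (a - 1) (by omega) (0 + j))
              have heq : mon F a b = mon F (a - 1) 0 * (Emb2 1 0 u - Emb2 0 0 u)
                  + Emb2 (a - 1) 0 u
                  - ∑ j ∈ Finset.range u.natDegree,
                      MvPolynomial.monomial (e a j) (u.coeff j) := by
                rw [hmul, hexp]; ring
              rw [heq]
              exact Submodule.sub_mem _
                (Submodule.add_mem _ (hIAU _ (Ideal.mul_mem_left _ _ hg3)) hsum2) hsum1
  have htop : U = ⊤ := by
    rw [eq_top_iff]
    intro f _
    have hf : f = ∑ v ∈ f.support, MvPolynomial.monomial v (MvPolynomial.coeff v f) :=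
      (MvPolynomial.support_sum_monomial_coeff f).symm
    rw [hf]
    refine Submodule.sum_mem _ fun v _ => ?_
    have : MvPolynomial.monomial v (MvPolynomial.coeff v f)
        = MvPolynomial.coeff v f • mon F (v 0) (v 1) := by
      rw [Stmt9Aux.mon, MvPolynomial.smul_monomial, smul_eq_mul, mul_one, ← Stmt9Aux.fin2_eq]
    rw [this]
    exact Submodule.smul_mem _ _ (key _ _)
  -- push to the quotient
  set π : MvPolynomial (Fin 2) F →ₗ[F] (MvPolynomial (Fin 2) F ⧸ IA) :=
    (Ideal.Quotient.mkₐ F IA).toLinearMap with hπ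
  have hsurj : Function.Surjective π := by
    intro x
    obtain ⟨y, rfl⟩ := Ideal.Quotient.mk_surjective x
    exact ⟨y, rfl⟩
  have hbot : Submodule.map π (Submodule.restrictScalars F IA) = ⊥ := by
    rw [Submodule.eq_bot_iff]
    rintro x ⟨y, hy, rfl⟩
    have hyy : π y = Ideal.Quotient.mk IA y := rfl
    rw [hyy]
    exact Ideal.Quotient.eq_zero_iff_mem.mpr hy
  have hspan : Submodule.span F (π '' Wsrc) = ⊤ := by
    calc Submodule.span F (π '' Wsrc)
        = Submodule.map π (Submodule.span F Wsrc) := (Submodule.map_span π Wsrc).symm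
      _ = Submodule.map π (Submodule.span F Wsrc) ⊔ ⊥ := by rw [sup_bot_eq]
      _ = Submodule.map π U := by rw [← hbot, ← Submodule.map_sup, hU]
      _ = ⊤ := by rw [htop, Submodule.map_top, LinearMap.range_eq_top.mpr hsurj]
  set sQ : Finset (MvPolynomial (Fin 2) F ⧸ IA) :=
    T.image (fun p => π (mon F p.1 p.2)) with hsQ
  have hset : (↑sQ : Set (MvPolynomial (Fin 2) F ⧸ IA)) = π '' Wsrc := by
    rw [hsQ, hWsrc, Finset.coe_image, Set.image_image]
  have hfin : Module.finrank F (MvPolynomial (Fin 2) F ⧸ IA) ≤ T.card := by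
    calc Module.finrank F (MvPolynomial (Fin 2) F ⧸ IA)
        = Module.finrank F (⊤ : Submodule F (MvPolynomial (Fin 2) F ⧸ IA)) :=
          (finrank_top F _).symm
      _ = Module.finrank F (Submodule.span F (↑sQ : Set (MvPolynomial (Fin 2) F ⧸ IA))) := by
          rw [hset, hspan]
      _ ≤ (↑sQ : Set (MvPolynomial (Fin 2) F ⧸ IA)).toFinset.card := finrank_span_le_card _
      _ = sQ.card := by simp
      _ ≤ T.card := Finset.card_image_le
  have hcard : T.card ≤ n₁ * m.natDegree - (n₁ - 1) := by
    have hsub : T ⊆ ({0} ×ˢ Finset.range m.natDegree)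
        ∪ ((Finset.Ioo 0 n₁) ×ˢ Finset.range (m.natDegree - 1)) := by
      intro p hp
      simp only [hT, Finset.mem_filter, Finset.mem_product, Finset.mem_range] at hp
      simp only [Finset.mem_union, Finset.mem_product, Finset.mem_singleton,
        Finset.mem_Ioo, Finset.mem_range]
      omega
    refine le_trans (Finset.card_le_card hsub) ?_
    refine le_trans (Finset.card_union_le _ _) ?_
    rw [Finset.card_product, Finset.card_product, Finset.card_singleton,
      Nat.card_Ioo, Finset.card_range, Finset.card_range]
    obtain ⟨k, hk⟩ : ∃ k, n₁ = k + 1 := ⟨n₁ - 1, by omega⟩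
    obtain ⟨ee, he⟩ : ∃ ee, m.natDegree = ee + 1 := ⟨u.natDegree, by omega⟩
    rw [hk, he]
    have h2 : k + 1 - 0 - 1 = k := by omega
    have h3 : ee + 1 - 1 = ee := by omega
    have h4 : (k + 1) * (ee + 1) = (1 * (ee + 1) + k * ee) + k := by ring
    rw [h2, h3, h4]
    generalize (1 * (ee + 1) + k * ee) = M
    omega
  exact hfin.trans hcard
end

section
/- (Proposition 3) Let A : ℕ × ℕ → 𝔽_q be a 2-dimensional array with A(i+n₁, j) = A(i, j+n₂) = A(i,j) for all i,j, regarded as an n₁-fold multisequence whose columns are the n₂-periodic sequences j ↦ A(i,j) for 0 ≤ i < n₁. Let m(y) be the joint minimal polynomial of this multisequence, i.e., the monic generator of the intersection of the ideals Val of the individual columns, and let JL(A) = deg(m) be the joint linear complexity. Then L(A) ≤ n₁·JL(A); equivalently, the normalized linear complexity L(A)/(n₁n₂) is at most the normalized joint linear complexity JL(A)/n₂. -/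
open MvPolynomial


/-- Proposition 3: let `A` be a doubly periodic 2-dimensional array with period
`(n₁, n₂)`, regarded as an `n₁`-fold multisequence, let `m(y)` be its joint
minimal polynomial (the monic generator of the intersection `J` of the ideals
of polynomials valid on the individual columns `j ↦ A i j`, `i < n₁`), and let
`JL(A) = deg m` be the joint linear complexity. Then `L(A) ≤ n₁ * JL(A)`,
i.e. `L(A)/(n₁n₂) ≤ JL(A)/n₂`. -/
theorem stmt_11 {F : Type*} [Field F] [Fintype F] (n₁ n₂ : ℕ)
    (hn₁ : 0 < n₁) (hn₂ : 0 < n₂)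
    (A : ℕ → ℕ → F)
    (hA₁ : ∀ i j : ℕ, A (i + n₁) j = A i j)
    (hA₂ : ∀ i j : ℕ, A i (j + n₂) = A i j)
    (J : Ideal (Polynomial F))
    (hJ : ∀ g : Polynomial F,
      g ∈ J ↔ ∀ i < n₁, ∀ β : ℕ, ∑ j ∈ g.support, g.coeff j * A i (j + β) = 0)
    (m : Polynomial F) (hmonic : m.Monic) (hgen : J = Ideal.span {m})
    (IA : Ideal (MvPolynomial (Fin 2) F))
    (hIA : ∀ f : MvPolynomial (Fin 2) F,
      f ∈ IA ↔ ∀ β₁ β₂ : ℕ,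
        ∑ v ∈ f.support, f.coeff v * A (v 0 + β₁) (v 1 + β₂) = 0) :
    Module.finrank F (MvPolynomial (Fin 2) F ⧸ IA) ≤ n₁ * m.natDegree := by
  classical
  set d := m.natDegree with hd
  have hsum : ∀ (f : MvPolynomial (Fin 2) F) (β₁ β₂ : ℕ),
      ∑ v ∈ f.support, f.coeff v * A (v 0 + β₁) (v 1 + β₂)
        = (Finsupp.linearCombination F (fun v : Fin 2 →₀ ℕ => A (v 0 + β₁) (v 1 + β₂)) ∘ₗ (AddMonoidAlgebra.coeffLinearEquiv F).toLinearMap) f := by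
    intro f β₁ β₂; rw [LinearMap.comp_apply, LinearEquiv.coe_coe, Finsupp.linearCombination_apply, Finsupp.sum]; rfl
  have hmono : ∀ (v : Fin 2 →₀ ℕ) (c : F) (β₁ β₂ : ℕ),
      (Finsupp.linearCombination F (fun v : Fin 2 →₀ ℕ => A (v 0 + β₁) (v 1 + β₂)) ∘ₗ (AddMonoidAlgebra.coeffLinearEquiv F).toLinearMap)
        (monomial v c) = c * A (v 0 + β₁) (v 1 + β₂) := by
    intro v c β₁ β₂
    exact Finsupp.linearCombination_single ..
  -- periodicity in the first variable
  have hper : ∀ i j : ℕ, A i j = A (i % n₁) j := by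
    intro i j
    conv_lhs => rw [← Nat.mod_add_div i n₁]
    generalize i / n₁ = k
    induction k with
    | zero => simp
    | succ k ih => rw [Nat.mul_succ, ← add_assoc, hA₁, ih]
  -- x^{n₁} - 1 is valid on A
  have h1 : ((X 0 : MvPolynomial (Fin 2) F) ^ n₁ - 1) ∈ IA := by
    rw [hIA]; intro β₁ β₂
    rw [hsum, X_pow_eq_monomial, ← MvPolynomial.C_1, MvPolynomial.C_apply,
      map_sub, hmono, hmono]
    have e0 : (Finsupp.single (0 : Fin 2) n₁) 0 = n₁ := by simp
    have e1 : (Finsupp.single (0 : Fin 2) n₁) 1 = 0 := by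
      simp [Finsupp.single_apply]
    rw [e0, e1]
    simp only [Finsupp.coe_zero, Pi.zero_apply, zero_add, one_mul]
    rw [add_comm n₁ β₁, hA₁, sub_self]
  -- m(y) is valid on A
  have hmJ : m ∈ J := hgen ▸ Ideal.mem_span_singleton_self m
  have h2 : (Polynomial.aeval (X 1 : MvPolynomial (Fin 2) F)) m ∈ IA := by
    rw [hIA]; intro β₁ β₂
    rw [hsum]
    have e : (Polynomial.aeval (X 1 : MvPolynomial (Fin 2) F)) m
        = ∑ j ∈ Finset.range (d + 1), monomial (Finsupp.single 1 j) (m.coeff j) := by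
      rw [Polynomial.aeval_eq_sum_range]
      refine Finset.sum_congr rfl fun j _ => ?_
      rw [X_pow_eq_monomial, smul_monomial, smul_eq_mul, mul_one]
    rw [e, map_sum]
    have e2 : ∀ j ∈ Finset.range (d + 1),
        (Finsupp.linearCombination F (fun v : Fin 2 →₀ ℕ => A (v 0 + β₁) (v 1 + β₂)) ∘ₗ (AddMonoidAlgebra.coeffLinearEquiv F).toLinearMap)
          (monomial (Finsupp.single 1 j) (m.coeff j))
        = m.coeff j * A (β₁ % n₁) (j + β₂) := by
      intro j _
      rw [hmono]
      have h0 : (Finsupp.single (1 : Fin 2) j) 0 = 0 := by simp [Finsupp.single_apply]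
      have h1' : (Finsupp.single (1 : Fin 2) j) 1 = j := by simp
      rw [h0, h1', zero_add, hper]
    rw [Finset.sum_congr rfl e2]
    have hz := (hJ m).mp hmJ (β₁ % n₁) (Nat.mod_lt _ hn₁) β₂
    rw [← hz]
    symm
    refine Finset.sum_subset Polynomial.supp_subset_range_natDegree_succ ?_
    intro j _ hj
    rw [Polynomial.notMem_support_iff.mp hj, zero_mul]
  -- case d = 0 : quotient is trivial
  rcases Nat.eq_zero_or_pos d with hd0 | hdpos
  · have hm1 : m = 1 := hmonic.natDegree_eq_zero.mp (by omega)
    rw [hm1, map_one] at h2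
    have hIAtop : IA = ⊤ := (Ideal.eq_top_iff_one IA).mpr h2
    subst hIAtop
    haveI : Subsingleton (MvPolynomial (Fin 2) F ⧸ (⊤ : Ideal (MvPolynomial (Fin 2) F))) :=
      Ideal.Quotient.subsingleton_iff.mpr rfl
    rw [Module.finrank_zero_of_subsingleton]
    exact Nat.zero_le _
  -- main case : span argument
  set π := Ideal.Quotient.mkₐ F IA with hπ
  have hπ0 : ∀ f ∈ IA, π f = 0 := fun f hf => by
    rw [hπ, Ideal.Quotient.mkₐ_eq_mk]
    exact Ideal.Quotient.eq_zero_iff_mem.mpr hf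
  set mon : ℕ → ℕ → MvPolynomial (Fin 2) F := fun a b => X 0 ^ a * X 1 ^ b with hmon
  set s : Finset (MvPolynomial (Fin 2) F ⧸ IA) :=
    (Finset.range n₁ ×ˢ Finset.range d).image (fun p => π (mon p.1 p.2)) with hs
  -- every monomial image lies in the span of s
  have hspan : ∀ N a b, a + b ≤ N → π (mon a b) ∈ Submodule.span F (s : Set _) := by
    intro N
    induction N with
    | zero =>
      intro a b hab
      have ha : a = 0 := by omega
      have hb : b = 0 := by omega
      subst ha; subst hb
      refine Submodule.subset_span ?_
      simp only [hs, Finset.coe_image, Set.mem_image, Finset.mem_coe]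
      exact ⟨(0, 0), by simp only [Finset.mem_product, Finset.mem_range]; exact ⟨hn₁, hdpos⟩, rfl⟩
    | succ N ih =>
      intro a b hab
      by_cases hbd : d ≤ b
      · -- reduce using m
        set r : Polynomial F := m - Polynomial.X ^ d with hr
        have hrdeg : r.natDegree < d := by
          rcases eq_or_ne r 0 with h0 | h0
          · rw [h0]; simpa using hdpos
          · have hlt : r.degree < (d : ℕ) := by
              have hsub := Polynomial.degree_sub_lt (p := m) (q := Polynomial.X ^ d)
                (by rw [Polynomial.degree_X_pow, Polynomial.degree_eq_natDegree hmonic.ne_zero])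
                hmonic.ne_zero
                (by rw [Polynomial.leadingCoeff_X_pow]; exact hmonic)
              rwa [Polynomial.degree_eq_natDegree hmonic.ne_zero] at hsub
            exact (Polynomial.natDegree_lt_iff_degree_lt h0).mpr hlt
        have key : mon a (b - d) * (Polynomial.aeval (X 1 : MvPolynomial (Fin 2) F)) m
            = mon a b + mon a (b - d) * (Polynomial.aeval (X 1 : MvPolynomial (Fin 2) F)) r := by
          have hsplit : (Polynomial.aeval (X 1 : MvPolynomial (Fin 2) F)) m
              = X 1 ^ d + (Polynomial.aeval (X 1 : MvPolynomial (Fin 2) F)) r := by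
            rw [hr, map_sub, map_pow, Polynomial.aeval_X]; ring
          rw [hsplit, mul_add]
          congr 1
          simp only [hmon]
          rw [mul_assoc, ← pow_add, Nat.sub_add_cancel hbd]
        have hmem : π (mon a b) = - π (mon a (b - d)
            * (Polynomial.aeval (X 1 : MvPolynomial (Fin 2) F)) r) := by
          have h0 : π (mon a (b - d) * (Polynomial.aeval (X 1 : MvPolynomial (Fin 2) F)) m) = 0 :=
            hπ0 _ (Ideal.mul_mem_left _ _ h2)
          rw [key, map_add] at h0
          exact eq_neg_of_add_eq_zero_left h0
        rw [hmem]
        refine Submodule.neg_mem _ ?_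
        have er : (Polynomial.aeval (X 1 : MvPolynomial (Fin 2) F)) r
            = ∑ j ∈ Finset.range d, r.coeff j • X 1 ^ j :=
          Polynomial.aeval_eq_sum_range' hrdeg _
        rw [er, Finset.mul_sum, map_sum]
        refine Submodule.sum_mem _ fun j hj => ?_
        have hmm : mon a (b - d) * r.coeff j • X 1 ^ j = r.coeff j • mon a (b - d + j) := by
          simp only [hmon]
          rw [mul_smul_comm, mul_assoc, ← pow_add]
        rw [hmm, map_smul]
        refine Submodule.smul_mem _ _ (ih a (b - d + j) ?_)
        have hj' : j < d := Finset.mem_range.mp hj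
        omega
      · by_cases hna : n₁ ≤ a
        · -- reduce using x^{n₁} - 1
          have key : mon a b - mon (a - n₁) b
              = mon (a - n₁) b * ((X 0 : MvPolynomial (Fin 2) F) ^ n₁ - 1) := by
            simp only [hmon]
            rw [mul_sub, mul_one]
            congr 1
            rw [mul_comm ((X 0 : MvPolynomial (Fin 2) F) ^ (a - n₁) * X 1 ^ b), ← mul_assoc,
              ← pow_add]
            congr 2
            omega
          have heq : π (mon a b) = π (mon (a - n₁) b) := by
            have h0 : π (mon a b - mon (a - n₁) b) = 0 :=
              key ▸ hπ0 _ (Ideal.mul_mem_left _ _ h1)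
            rw [map_sub, sub_eq_zero] at h0
            exact h0
          rw [heq]
          exact ih (a - n₁) b (by omega)
        · refine Submodule.subset_span ?_
          simp only [hs, Finset.coe_image, Set.mem_image, Finset.mem_coe]
          exact ⟨(a, b), by simp only [Finset.mem_product, Finset.mem_range]; omega, rfl⟩
  -- the span is everything
  have htop : Submodule.span F (s : Set (MvPolynomial (Fin 2) F ⧸ IA)) = ⊤ := by
    rw [eq_top_iff]
    rintro x -
    obtain ⟨f, rfl⟩ := Ideal.Quotient.mkₐ_surjective F IA x
    rw [← support_sum_monomial_coeff f, map_sum]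
    refine Submodule.sum_mem _ fun v hv => ?_
    have hv2 : v = Finsupp.single 0 (v 0) + Finsupp.single 1 (v 1) := by
      ext i; fin_cases i <;> simp [Finsupp.single_apply]
    have hms : (f.coeff v) • mon (v 0) (v 1) = monomial v (f.coeff v) := by
      simp only [hmon]
      rw [X_pow_eq_monomial, X_pow_eq_monomial, monomial_mul, one_mul, smul_monomial,
        smul_eq_mul, mul_one, ← hv2]
    rw [← hms, map_smul]
    exact Submodule.smul_mem _ _ (hspan (v 0 + v 1) (v 0) (v 1) le_rfl)
  -- conclude
  have hle : Module.finrank F (MvPolynomial (Fin 2) F ⧸ IA) ≤ s.card := by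
    have hfr := finrank_span_finset_le_card (R := F) s
    rw [Set.finrank, htop, finrank_top] at hfr
    exact hfr
  refine hle.trans ?_
  calc s.card ≤ (Finset.range n₁ ×ˢ Finset.range d).card := Finset.card_image_le
    _ = n₁ * d := by simp [Finset.card_product]
end

section
/- Let S : ℕ → Z_{n₂} be a shift sequence with S(i+n₁) = S(i) for all i, n₁ ≥ 2, let C : ℕ → 𝔽_q be a column sequence with C(j+n₂) = C(j) for all j and minimal polynomial m(y), and let A be the 2-dimensional composed array defined by A(i,j) = C(j − S(i) mod n₂). If y − 1 divides m(y), then the normalized multidimensional linear complexity of A is strictly smaller than its normalized joint linear complexity as a multisequence: L(A) < n₁·JL(A), where JL(A) is the degree of the joint minimal polynomial of the columns of A. -/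
set_option linter.unusedSectionVars false
namespace Stmt12Aux

variable {F : Type*} [Field F]

lemma C_mod {n : ℕ} {C : ℕ → F} (hC : ∀ j, C (j + n) = C j) :
    ∀ a b : ℕ, a ≡ b [MOD n] → C a = C b := by
  have key : ∀ k a, C (a + n * k) = C a := by
    intro k
    induction k with
    | zero => simp
    | succ k ih => intro a; rw [Nat.mul_succ, ← add_assoc, hC, ih]
  have half : ∀ a b, a ≤ b → a ≡ b [MOD n] → C a = C b := by
    intro a b hab h
    obtain ⟨k, hk⟩ := (Nat.modEq_iff_dvd' hab).mp h
    have hb : b = a + n * k := by omega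
    rw [hb, key]
  intro a b h
  rcases le_total a b with hab | hba
  · exact half a b hab h
  · exact (half b a hba h.symm).symm

lemma C_val {n : ℕ} [NeZero n] {C : ℕ → F} (hC : ∀ j, C (j + n) = C j)
    (a : ℕ) (z : ZMod n) (h : (a : ZMod n) = z) : C z.val = C a := by
  apply C_mod hC
  have : ((z.val : ℕ) : ZMod n) = (a : ZMod n) := by rw [h]; simp
  exact (ZMod.natCast_eq_natCast_iff _ _ _).mp this

lemma A_shift {n₂ : ℕ} [NeZero n₂] {C : ℕ → F} (hC : ∀ j, C (j + n₂) = C j)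
    (S : ℕ → ZMod n₂) (A : ℕ → ℕ → F)
    (hA : ∀ i j, A i j = C (((j : ZMod n₂) - S i).val)) (i j β : ℕ) :
    A i (j + β) = C (j + ((β : ZMod n₂) - S i).val) := by
  rw [hA]
  refine C_val hC _ _ ?_
  push_cast
  rw [ZMod.natCast_val, ZMod.cast_id]
  ring

/-! ### 1-D support sums -/

def U (C : ℕ → F) (γ : ℕ) (p : Polynomial F) : F :=
  ∑ j ∈ p.support, p.coeff j * C (j + γ)

lemma U_eq_range (C : ℕ → F) (γ : ℕ) (p : Polynomial F) (N : ℕ) (hN : p.natDegree < N) :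
    U C γ p = ∑ j ∈ Finset.range N, p.coeff j * C (j + γ) := by
  refine Finset.sum_subset (fun j hj => ?_) (fun j _ hj => ?_)
  · exact Finset.mem_range.mpr (lt_of_le_of_lt (Polynomial.le_natDegree_of_mem_supp j hj) hN)
  · rw [Polynomial.notMem_support_iff.mp hj, zero_mul]

lemma U_sub (C : ℕ → F) (γ : ℕ) (p q : Polynomial F) :
    U C γ (p - q) = U C γ p - U C γ q := by
  set N := (p - q).natDegree + p.natDegree + q.natDegree + 1 with hN
  rw [U_eq_range C γ (p - q) N (by omega), U_eq_range C γ p N (by omega),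
      U_eq_range C γ q N (by omega), ← Finset.sum_sub_distrib]
  refine Finset.sum_congr rfl fun j _ => by rw [Polynomial.coeff_sub, sub_mul]

lemma U_X_mul (C : ℕ → F) (γ : ℕ) (p : Polynomial F) :
    U C γ (Polynomial.X * p) = U C (γ + 1) p := by
  have h1 : (Polynomial.X * p).natDegree < p.natDegree + 2 := by
    have := Polynomial.natDegree_mul_le (p := (Polynomial.X : Polynomial F)) (q := p)
    simp [Polynomial.natDegree_X] at this
    omega
  rw [U_eq_range C γ _ (p.natDegree + 2) h1, Finset.sum_range_succ',
      U_eq_range C (γ + 1) p (p.natDegree + 1) (by omega)]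
  simp only [Polynomial.coeff_X_mul]
  rw [Polynomial.mul_coeff_zero, Polynomial.coeff_X_zero, zero_mul, zero_mul, add_zero]
  refine Finset.sum_congr rfl fun j _ => by ring_nf

/-! ### 2-D support sums -/

def T (A : ℕ → ℕ → F) (β₁ β₂ : ℕ) (f : MvPolynomial (Fin 2) F) : F :=
  ∑ v ∈ f.support, f.coeff v * A (v 0 + β₁) (v 1 + β₂)

lemma T_eq_subset (A : ℕ → ℕ → F) (β₁ β₂ : ℕ) (f : MvPolynomial (Fin 2) F)
    (s : Finset (Fin 2 →₀ ℕ)) (hs : f.support ⊆ s) :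
    T A β₁ β₂ f = ∑ v ∈ s, f.coeff v * A (v 0 + β₁) (v 1 + β₂) :=
  Finset.sum_subset hs (fun v _ hv => by
    rw [MvPolynomial.notMem_support_iff.mp hv, zero_mul])

lemma T_add (A : ℕ → ℕ → F) (β₁ β₂ : ℕ) (f g : MvPolynomial (Fin 2) F) :
    T A β₁ β₂ (f + g) = T A β₁ β₂ f + T A β₁ β₂ g := by
  classical
  rw [T_eq_subset A β₁ β₂ (f + g) (f.support ∪ g.support) MvPolynomial.support_add,
      T_eq_subset A β₁ β₂ f (f.support ∪ g.support) Finset.subset_union_left,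
      T_eq_subset A β₁ β₂ g (f.support ∪ g.support) Finset.subset_union_right,
      ← Finset.sum_add_distrib]
  exact Finset.sum_congr rfl fun v _ => by rw [MvPolynomial.coeff_add, add_mul]

lemma T_neg (A : ℕ → ℕ → F) (β₁ β₂ : ℕ) (f : MvPolynomial (Fin 2) F) :
    T A β₁ β₂ (-f) = -T A β₁ β₂ f := by
  unfold T
  rw [MvPolynomial.support_neg, ← Finset.sum_neg_distrib]
  exact Finset.sum_congr rfl fun v _ => by rw [MvPolynomial.coeff_neg, neg_mul]

lemma T_sub (A : ℕ → ℕ → F) (β₁ β₂ : ℕ) (f g : MvPolynomial (Fin 2) F) :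
    T A β₁ β₂ (f - g) = T A β₁ β₂ f - T A β₁ β₂ g := by
  rw [sub_eq_add_neg, T_add, T_neg, sub_eq_add_neg]

lemma T_monomial (A : ℕ → ℕ → F) (β₁ β₂ : ℕ) (v : Fin 2 →₀ ℕ) (c : F) :
    T A β₁ β₂ (MvPolynomial.monomial v c) = c * A (v 0 + β₁) (v 1 + β₂) := by
  classical
  rcases eq_or_ne c 0 with h | h
  · simp [T, h]
  · rw [T, MvPolynomial.support_monomial, if_neg h, Finset.sum_singleton,
        MvPolynomial.coeff_monomial, if_pos rfl]

lemma T_sum {ι : Type*} (A : ℕ → ℕ → F) (β₁ β₂ : ℕ) (s : Finset ι)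
    (g : ι → MvPolynomial (Fin 2) F) :
    T A β₁ β₂ (∑ j ∈ s, g j) = ∑ j ∈ s, T A β₁ β₂ (g j) := by
  classical
  induction s using Finset.cons_induction with
  | empty => simp [T]
  | cons a s ha ih => rw [Finset.sum_cons, T_add, ih, Finset.sum_cons]

lemma X0_pow_mul_aeval (a : ℕ) (p : Polynomial F) :
    (MvPolynomial.X 0 : MvPolynomial (Fin 2) F) ^ a * Polynomial.aeval (MvPolynomial.X 1) p
      = ∑ j ∈ p.support,
          MvPolynomial.monomial (Finsupp.single 0 a + Finsupp.single 1 j) (p.coeff j) := by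
  rw [Polynomial.aeval_def, Polynomial.eval₂_eq_sum, Polynomial.sum_def, Finset.mul_sum]
  refine Finset.sum_congr rfl fun j hj => ?_
  have hc : (algebraMap F (MvPolynomial (Fin 2) F)) (p.coeff j) = MvPolynomial.C (p.coeff j) := rfl
  rw [hc, MvPolynomial.X_pow_eq_monomial, MvPolynomial.X_pow_eq_monomial,
      MvPolynomial.C_apply, MvPolynomial.monomial_mul, MvPolynomial.monomial_mul]
  rw [one_mul, mul_one]
  congr 1
  simp

lemma single_apply_00 (a j : ℕ) :
    (Finsupp.single (0 : Fin 2) a + Finsupp.single (1 : Fin 2) j : Fin 2 →₀ ℕ) 0 = a := by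
  simp
lemma single_apply_11 (a j : ℕ) :
    (Finsupp.single (0 : Fin 2) a + Finsupp.single (1 : Fin 2) j : Fin 2 →₀ ℕ) 1 = j := by
  simp [Finsupp.single_apply]

lemma T_X0_pow_mul_aeval (A : ℕ → ℕ → F) (β₁ β₂ a : ℕ) (p : Polynomial F) :
    T A β₁ β₂ ((MvPolynomial.X 0 : MvPolynomial (Fin 2) F) ^ a *
        Polynomial.aeval (MvPolynomial.X 1) p)
      = ∑ j ∈ p.support, p.coeff j * A (a + β₁) (j + β₂) := by
  rw [X0_pow_mul_aeval, T_sum]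
  refine Finset.sum_congr rfl fun j hj => ?_
  rw [T_monomial, single_apply_00, single_apply_11]

lemma monomial_fin2 (v : Fin 2 →₀ ℕ) (c : F) :
    MvPolynomial.monomial v c
      = MvPolynomial.C c * MvPolynomial.X 0 ^ (v 0) * MvPolynomial.X 1 ^ (v 1) := by
  rw [MvPolynomial.monomial_eq, Finsupp.prod_fintype _ _ (fun i => pow_zero _),
      Fin.prod_univ_two, mul_assoc]

end Stmt12Aux

set_option maxHeartbeats 1000000 in
open Stmt12Aux in
/-- Let `A` be the 2-dimensional array obtained by composing an `n₁`-periodic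
shift sequence `S : ℕ → ZMod n₂` (with `n₁ ≥ 2`) with an `n₂`-periodic column
sequence `C` whose minimal polynomial `m(y)` is divisible by `y - 1`. Then the
normalized multidimensional linear complexity of `A` is strictly smaller than
its normalized joint linear complexity as a multisequence:
`L(A) < n₁ * JL(A)`, where `JL(A)` is the degree of the joint minimal
polynomial `mj` of the columns of `A`. -/
theorem stmt_12 {F : Type*} [Field F] [Fintype F] (n₁ n₂ : ℕ)
    (hn₁ : 2 ≤ n₁) [NeZero n₂]
    (S : ℕ → ZMod n₂) (hS : ∀ i : ℕ, S (i + n₁) = S i)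
    (C : ℕ → F) (hC : ∀ j : ℕ, C (j + n₂) = C j)
    (A : ℕ → ℕ → F)
    (hA : ∀ i j : ℕ, A i j = C (((j : ZMod n₂) - S i).val))
    (IC : Ideal (Polynomial F))
    (hIC : ∀ g : Polynomial F,
      g ∈ IC ↔ ∀ β : ℕ, ∑ j ∈ g.support, g.coeff j * C (j + β) = 0)
    (m : Polynomial F) (hmonic : m.Monic) (hgen : IC = Ideal.span {m})
    (hdiv : (Polynomial.X - 1 : Polynomial F) ∣ m)
    (J : Ideal (Polynomial F))
    (hJ : ∀ g : Polynomial F,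
      g ∈ J ↔ ∀ i < n₁, ∀ β : ℕ, ∑ j ∈ g.support, g.coeff j * A i (j + β) = 0)
    (mj : Polynomial F) (hmjmonic : mj.Monic) (hmjgen : J = Ideal.span {mj})
    (IA : Ideal (MvPolynomial (Fin 2) F))
    (hIA : ∀ f : MvPolynomial (Fin 2) F,
      f ∈ IA ↔ ∀ β₁ β₂ : ℕ,
        ∑ v ∈ f.support, f.coeff v * A (v 0 + β₁) (v 1 + β₂) = 0) :
    Module.finrank F (MvPolynomial (Fin 2) F ⧸ IA) < n₁ * mj.natDegree := by
  classical
  set X0 : MvPolynomial (Fin 2) F := MvPolynomial.X 0 with hX0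
  set X1 : MvPolynomial (Fin 2) F := MvPolynomial.X 1 with hX1
  -- basic degree facts
  have hmne : m ≠ 0 := hmonic.ne_zero
  have hd1 : 1 ≤ m.natDegree := by
    have h1 := Polynomial.natDegree_le_of_dvd hdiv hmne
    have h2 : (Polynomial.X - 1 : Polynomial F).natDegree = 1 := by
      simpa using Polynomial.natDegree_X_sub_C (1 : F)
    omega
  have hmIC : m ∈ IC := by rw [hgen]; exact Ideal.mem_span_singleton_self m
  -- column annihilation
  have hcol : ∀ g : Polynomial F,
      (∀ β : ℕ, ∑ j ∈ g.support, g.coeff j * C (j + β) = 0) →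
      ∀ i β : ℕ, ∑ j ∈ g.support, g.coeff j * A i (j + β) = 0 := by
    intro g hg i β
    have h0 := hg (((β : ZMod n₂) - S i).val)
    rw [← h0]
    exact Finset.sum_congr rfl fun j _ => by rw [A_shift hC S A hA]
  -- J = IC hence mj = m
  have hJIC : J = IC := by
    ext g
    rw [hJ, hIC]
    constructor
    · intro hg β
      have h0 := hg 0 (by omega) (β + (S 0).val)
      rw [← h0]
      refine Finset.sum_congr rfl fun j _ => ?_
      rw [A_shift hC S A hA]
      congr 1
      refine C_mod hC _ _ ?_
      refine ((ZMod.natCast_eq_natCast_iff _ _ _).mp ?_)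
      push_cast
      simp [ZMod.natCast_val, ZMod.cast_id]
    · intro hg i _ β
      exact hcol g hg i β
  have hmjm : mj = m :=
    Polynomial.eq_of_monic_of_associated hmjmonic hmonic
      (Ideal.span_singleton_eq_span_singleton.mp (by rw [← hmjgen, hJIC, hgen]))
  -- the cofactor h
  obtain ⟨h, hmh⟩ := hdiv
  have hXm : (Polynomial.X - 1 : Polynomial F).Monic := by
    simpa using Polynomial.monic_X_sub_C (1 : F)
  have hhm : h.Monic := hXm.of_mul_monic_left (hmh ▸ hmonic)
  have hdh : h.natDegree = m.natDegree - 1 := by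
    have hmul := Polynomial.natDegree_mul hXm.ne_zero hhm.ne_zero
    rw [← hmh] at hmul
    have h2 : (Polynomial.X - 1 : Polynomial F).natDegree = 1 := by
      simpa using Polynomial.natDegree_X_sub_C (1 : F)
    omega
  -- (M1)
  have hXnIA : (X0 ^ n₁ - 1 : MvPolynomial (Fin 2) F) ∈ IA := by
    rw [hIA]
    intro β₁ β₂
    show T A β₁ β₂ (X0 ^ n₁ - 1) = 0
    have e2 : (1 : MvPolynomial (Fin 2) F) = MvPolynomial.monomial 0 1 := by
      rw [← MvPolynomial.C_apply, map_one]
    rw [T_sub, hX0, MvPolynomial.X_pow_eq_monomial, e2, T_monomial, T_monomial]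
    simp only [Finsupp.single_eq_same, Finsupp.single_eq_of_ne' (show (0 : Fin 2) ≠ 1 by decide),
      Finsupp.coe_zero, Pi.zero_apply, one_mul, zero_add]
    have : A (n₁ + β₁) β₂ = A β₁ β₂ := by
      rw [hA, hA]
      congr 2
      rw [add_comm n₁ β₁, hS]
    rw [this, sub_self]
  -- (M2)
  have hmIA : Polynomial.aeval X1 m ∈ IA := by
    rw [hIA]
    intro β₁ β₂
    show T A β₁ β₂ (Polynomial.aeval X1 m) = 0
    have h0 := T_X0_pow_mul_aeval A β₁ β₂ 0 m
    rw [pow_zero, one_mul] at h0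
    rw [hX1, h0]
    have := hcol m (fun β => (hIC m).mp hmIC β) β₁ β₂
    simpa using this
  -- constancy of the h-correlation
  have hUC : ∀ γ, U C γ m = 0 := fun γ => (hIC m).mp hmIC γ
  have hUconst : ∀ γ, U C γ h = U C 0 h := by
    intro γ
    induction γ with
    | zero => rfl
    | succ γ ih =>
      have hm0 := hUC γ
      have hmm : m = Polynomial.X * h - h := by rw [hmh]; ring
      rw [hmm, U_sub, U_X_mul, sub_eq_zero] at hm0
      rw [hm0, ih]
  have hDconst : ∀ i β : ℕ, ∑ j ∈ h.support, h.coeff j * A i (j + β) = U C 0 h := by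
    intro i β
    have : ∑ j ∈ h.support, h.coeff j * A i (j + β)
        = U C (((β : ZMod n₂) - S i).val) h :=
      Finset.sum_congr rfl fun j _ => by rw [A_shift hC S A hA]
    rw [this, hUconst]
  -- (M3)
  have hfIA : (X0 - 1) * Polynomial.aeval X1 h ∈ IA := by
    rw [hIA]
    intro β₁ β₂
    show T A β₁ β₂ ((X0 - 1) * Polynomial.aeval X1 h) = 0
    have hexp : (X0 - 1) * Polynomial.aeval X1 h
        = X0 ^ 1 * Polynomial.aeval X1 h - X0 ^ 0 * Polynomial.aeval X1 h := by ring
    rw [hexp, hX0, hX1, T_sub, T_X0_pow_mul_aeval, T_X0_pow_mul_aeval]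
    have e1 : ∑ j ∈ h.support, h.coeff j * A (1 + β₁) (j + β₂) = U C 0 h := hDconst _ _
    have e0 : ∑ j ∈ h.support, h.coeff j * A (0 + β₁) (j + β₂) = U C 0 h := hDconst _ _
    rw [e1, e0, sub_self]
  -- quotient linear algebra
  set π : MvPolynomial (Fin 2) F →ₐ[F] (MvPolynomial (Fin 2) F ⧸ IA) :=
    Ideal.Quotient.mkₐ F IA with hπdef
  set e : ℕ → ℕ → (MvPolynomial (Fin 2) F ⧸ IA) := fun a b => π (X0 ^ a * X1 ^ b) with he
  set Tst : Finset (ℕ × ℕ) := Finset.range n₁ ×ˢ Finset.range m.natDegree with hTst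
  set pt : ℕ × ℕ := (1, m.natDegree - 1) with hpt
  set V : Submodule F (MvPolynomial (Fin 2) F ⧸ IA) :=
    Submodule.span F ((((Tst.erase pt).image fun p => e p.1 p.2 :
      Finset (MvPolynomial (Fin 2) F ⧸ IA))) : Set (MvPolynomial (Fin 2) F ⧸ IA)) with hV
  have hπ0 : ∀ f ∈ IA, π f = 0 := by
    intro f hf
    rw [hπdef, Ideal.Quotient.mkₐ_eq_mk]
    exact Ideal.Quotient.eq_zero_iff_mem.mpr hf
  have eq_aeval : ∀ (a : ℕ) (p : Polynomial F),
      π (X0 ^ a * Polynomial.aeval X1 p) = ∑ j ∈ p.support, p.coeff j • e a j := by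
    intro a p
    rw [hX0, hX1, X0_pow_mul_aeval, map_sum]
    refine Finset.sum_congr rfl fun j hj => ?_
    rw [monomial_fin2, single_apply_00, single_apply_11, mul_assoc,
      ← MvPolynomial.smul_eq_C_mul, map_smul]
  have hgenmem : ∀ a b : ℕ, a < n₁ → b < m.natDegree → (a, b) ≠ pt → e a b ∈ V := by
    intro a b ha hb hne
    refine Submodule.subset_span (Finset.mem_coe.mpr (Finset.mem_image.mpr ⟨(a, b), ?_, rfl⟩))
    exact Finset.mem_erase.mpr ⟨hne, Finset.mem_product.mpr
      ⟨Finset.mem_range.mpr ha, Finset.mem_range.mpr hb⟩⟩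
  -- the extra relation coming from hfIA
  have hrel : e 1 (m.natDegree - 1) ∈ V := by
    set r₀ : Polynomial F := h - Polynomial.X ^ h.natDegree with hr₀
    have hr₀deg : r₀.degree < (h.natDegree : WithBot ℕ) := by
      have h1 : h.degree = (Polynomial.X ^ h.natDegree : Polynomial F).degree := by
        rw [Polynomial.degree_X_pow, Polynomial.degree_eq_natDegree hhm.ne_zero]
      have h2 : h.leadingCoeff = (Polynomial.X ^ h.natDegree : Polynomial F).leadingCoeff := by
        rw [hhm.leadingCoeff, (Polynomial.monic_X_pow _).leadingCoeff]
      have h3 := Polynomial.degree_sub_lt h1 hhm.ne_zero h2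
      rwa [Polynomial.degree_eq_natDegree hhm.ne_zero] at h3
    have hr₀supp : ∀ j ∈ r₀.support, j < h.natDegree := by
      intro j hj
      have h2 := Polynomial.le_degree_of_ne_zero (Polynomial.mem_support_iff.mp hj)
      exact_mod_cast lt_of_le_of_lt h2 hr₀deg
    have hq : π (X0 * Polynomial.aeval X1 h) = π (Polynomial.aeval X1 h) := by
      have h0 := hπ0 _ hfIA
      rw [show (X0 - 1) * Polynomial.aeval X1 h
          = X0 * Polynomial.aeval X1 h - Polynomial.aeval X1 h by ring,
        map_sub, sub_eq_zero] at h0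
      exact h0
    have hsplit : h = Polynomial.X ^ h.natDegree + r₀ := by rw [hr₀]; ring
    have hsum : π (X0 * Polynomial.aeval X1 h)
        = e 1 h.natDegree + π (X0 ^ 1 * Polynomial.aeval X1 r₀) := by
      conv_lhs => rw [hsplit]
      rw [map_add, mul_add, map_add]
      congr 1
      · rw [he]
        congr 1
        rw [map_pow, Polynomial.aeval_X, pow_one, hX1]
      · rw [pow_one]
    have hkey : e 1 h.natDegree
        = π (X0 ^ 0 * Polynomial.aeval X1 h) - π (X0 ^ 1 * Polynomial.aeval X1 r₀) := by
      rw [pow_zero, one_mul, ← hq, hsum]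
      ring
    have hd' : m.natDegree - 1 = h.natDegree := hdh.symm
    rw [hd', hkey, eq_aeval, eq_aeval]
    refine Submodule.sub_mem V (Submodule.sum_mem V fun j hj => Submodule.smul_mem V _ ?_)
      (Submodule.sum_mem V fun j hj => Submodule.smul_mem V _ ?_)
    · refine hgenmem 0 j (by omega) ?_ ?_
      · have := Polynomial.le_natDegree_of_mem_supp j hj
        omega
      · simp [hpt]
    · refine hgenmem 1 j (by omega) ?_ ?_
      · have := hr₀supp j hj
        omega
      · have hjlt := hr₀supp j hj
        simp only [hpt]
        intro hxx
        have hj2 : j = m.natDegree - 1 := congrArg Prod.snd hxx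
        omega
  have hB : ∀ a b : ℕ, a < n₁ → b < m.natDegree → e a b ∈ V := by
    intro a b ha hb
    by_cases hx : (a, b) = pt
    · rw [hpt, Prod.mk.injEq] at hx
      rw [hx.1, hx.2]
      exact hrel
    · exact hgenmem a b ha hb hx
  have hCe : ∀ a b : ℕ, e a b ∈ V := by
    intro a b
    set r : Polynomial F := Polynomial.X ^ b %ₘ m with hr
    have hrdeg : ∀ j ∈ r.support, j < m.natDegree := by
      intro j hj
      have h1 := Polynomial.degree_modByMonic_lt (Polynomial.X ^ b) hmonic
      have h2 := Polynomial.le_degree_of_ne_zero (Polynomial.mem_support_iff.mp hj)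
      rw [Polynomial.degree_eq_natDegree hmne] at h1
      exact_mod_cast lt_of_le_of_lt h2 h1
    have hstep1 : π (X0 ^ a * X1 ^ b) = π (X0 ^ a * Polynomial.aeval X1 r) := by
      have hmem : X0 ^ a * X1 ^ b - X0 ^ a * Polynomial.aeval X1 r ∈ IA := by
        have hxb : (X1 : MvPolynomial (Fin 2) F) ^ b
            = Polynomial.aeval X1 ((Polynomial.X : Polynomial F) ^ b) := by
          simp
        have hsub : (Polynomial.X ^ b - r : Polynomial F)
            = m * (Polynomial.X ^ b /ₘ m) := by
          conv_lhs => rw [← Polynomial.modByMonic_add_div (Polynomial.X ^ b) m]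
          rw [hr]
          ring
        have hgoal : X0 ^ a * X1 ^ b - X0 ^ a * Polynomial.aeval X1 r
            = (X0 ^ a * Polynomial.aeval X1 (Polynomial.X ^ b /ₘ m))
              * Polynomial.aeval X1 m := by
          rw [hxb, ← mul_sub, ← map_sub, hsub, map_mul]
          ring
        rw [hgoal]
        exact Ideal.mul_mem_left _ _ hmIA
      have h0 := hπ0 _ hmem
      rwa [map_sub, sub_eq_zero] at h0
    have hstep2 : π (X0 ^ a * Polynomial.aeval X1 r)
        = π (X0 ^ (a % n₁) * Polynomial.aeval X1 r) := by
      have hmem : (X0 ^ a - X0 ^ (a % n₁)) * Polynomial.aeval X1 r ∈ IA := by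
        obtain ⟨w, hw⟩ : (X0 ^ n₁ - 1 : MvPolynomial (Fin 2) F)
            ∣ (X0 ^ n₁) ^ (a / n₁) - 1 := by
          simpa using sub_dvd_pow_sub_pow (X0 ^ n₁) 1 (a / n₁)
        have ha2 : X0 ^ a = X0 ^ (a % n₁) * (X0 ^ n₁) ^ (a / n₁) := by
          rw [← pow_mul, ← pow_add]
          congr 1
          exact (Nat.mod_add_div a n₁).symm
        have hgoal : (X0 ^ a - X0 ^ (a % n₁)) * Polynomial.aeval X1 r
            = (X0 ^ (a % n₁) * Polynomial.aeval X1 r * w) * (X0 ^ n₁ - 1) := by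
          calc (X0 ^ a - X0 ^ (a % n₁)) * Polynomial.aeval X1 r
              = X0 ^ (a % n₁) * Polynomial.aeval X1 r * ((X0 ^ n₁) ^ (a / n₁) - 1) := by
                rw [ha2]; ring
            _ = _ := by rw [hw]; ring
        rw [hgoal]
        exact Ideal.mul_mem_left _ _ hXnIA
      have h0 := hπ0 _ hmem
      rw [sub_mul, map_sub, sub_eq_zero] at h0
      exact h0
    show π (X0 ^ a * X1 ^ b) ∈ V
    rw [hstep1, hstep2, eq_aeval]
    exact Submodule.sum_mem V fun j hj =>
      Submodule.smul_mem V _ (hB _ _ (Nat.mod_lt _ (by omega)) (hrdeg j hj))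
  have hall : ∀ f : MvPolynomial (Fin 2) F, π f ∈ V := by
    intro f
    have hrepr : π f = ∑ v ∈ f.support, MvPolynomial.coeff v f • e (v 0) (v 1) := by
      conv_lhs => rw [MvPolynomial.as_sum f]
      rw [map_sum]
      refine Finset.sum_congr rfl fun v hv => ?_
      rw [monomial_fin2, mul_assoc, ← MvPolynomial.smul_eq_C_mul, map_smul]
    rw [hrepr]
    exact Submodule.sum_mem V fun v hv => Submodule.smul_mem V _ (hCe _ _)
  have hVtop : V = ⊤ := by
    rw [Submodule.eq_top_iff']
    intro x
    obtain ⟨f, rfl⟩ := Ideal.Quotient.mk_surjective (I := IA) x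
    exact hall f
  -- counting
  have hptT : pt ∈ Tst := by
    refine Finset.mem_product.mpr ⟨Finset.mem_range.mpr ?_, Finset.mem_range.mpr ?_⟩
    · show (1 : ℕ) < n₁
      omega
    · show m.natDegree - 1 < m.natDegree
      omega
  have hcard : (Tst.erase pt).card = n₁ * m.natDegree - 1 := by
    rw [Finset.card_erase_of_mem hptT, hTst, Finset.card_product, Finset.card_range,
      Finset.card_range]
  have hle : Module.finrank F (MvPolynomial (Fin 2) F ⧸ IA) ≤ n₁ * m.natDegree - 1 := by
    have h1 := finrank_span_finset_le_card (R := F) ((Tst.erase pt).image fun p => e p.1 p.2)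
    have h2 : Module.finrank F (MvPolynomial (Fin 2) F ⧸ IA) = Module.finrank F V := by
      rw [hVtop, finrank_top]
    rw [h2]
    exact le_trans h1 (le_trans (Finset.card_image_le) (le_of_eq hcard))
  have hpos : 0 < n₁ * m.natDegree := Nat.mul_pos (by omega) (by omega)
  rw [hmjm]
  exact lt_of_le_of_lt hle (Nat.sub_lt hpos one_pos)
end
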